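/- arXiv:2001.00700 — 3 statements merged into one kernel-verified Lean document; each statement's English description precedes it below -/
import Mathlib

section
/- Under Assumptions 1 and 3, if a₁<0 or a₂<0, then for every y∈𝕊₊ the occupation measure (q̃_{y,y'}; y'∈𝕊₊) is finite; more precisely, Σ_{y'∈𝕊₊} q̃_{y,y'} = E(τ | Y₀=y) < ∞. -/
open scoped ENNReal

namespace MMRW2d

/-! ## General kernels over a countable index set, with entries in `ℝ≥0∞` -/

/-- Kernel (infinite matrix) multiplication over `ℝ≥0∞`. -/
noncomputable def kmul {α : Type*} (p q : α → α → ℝ≥0∞) : α → α → ℝ≥0∞ :=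
  fun i j => ∑' k, p i k * q k j

/-- `n`-step kernel power. -/
noncomputable def kpow {α : Type*} [DecidableEq α] (p : α → α → ℝ≥0∞) : ℕ → α → α → ℝ≥0∞
  | 0 => fun i j => if i = j then 1 else 0
  | n + 1 => kmul p (kpow p n)

/-- Convergence parameter `cp(A) = sup{r ≥ 0 : Σ_n rⁿ Aⁿ < ∞ entrywise}`. -/
noncomputable def cp {α : Type*} [DecidableEq α] (p : α → α → ℝ≥0∞) : ℝ≥0∞ :=
  sSup {r : ℝ≥0∞ | ∀ i j, (∑' n : ℕ, r ^ n * kpow p n i j) ≠ ⊤}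

/-- `R` is the minimal nonnegative solution of `R = R² A₋₁ + R A₀ + A₁`. -/
def IsMinimalSolution {κ : Type*} (Am A0 Ap R : κ → κ → ℝ≥0∞) : Prop :=
  (∀ i j, R i j = kmul (kmul R R) Am i j + kmul R A0 i j + Ap i j) ∧
  ∀ S : κ → κ → ℝ≥0∞,
    (∀ i j, S i j = kmul (kmul S S) Am i j + kmul S A0 i j + Ap i j) → ∀ i j, R i j ≤ S i j

variable {s₀ : ℕ}

/-! ## The 2d skip-free Markov-modulated random walk -/

/-- The defining data of a 2d-MMRW: the blocks `A_{i,j}` are nonnegative, vanish outside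
`i,j ∈ {-1,0,1}`, and `Σ_{i,j} A_{i,j}` is stochastic. -/
structure IsMMRW (A : ℤ → ℤ → Matrix (Fin s₀) (Fin s₀) ℝ) : Prop where
  nonneg : ∀ i j a b, 0 ≤ A i j a b
  skipfree : ∀ i j : ℤ, (i ∉ Finset.Icc (-1 : ℤ) 1 ∨ j ∉ Finset.Icc (-1 : ℤ) 1) → A i j = 0
  stochastic : ∀ a, ∑ i ∈ Finset.Icc (-1 : ℤ) 1, ∑ j ∈ Finset.Icc (-1 : ℤ) 1, ∑ b, A i j a b = 1

/-- The transition kernel of the 2d-MMRW `{Y_n}` on `𝕊 = ℤ² × S₀`. -/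
noncomputable def ker (A : ℤ → ℤ → Matrix (Fin s₀) (Fin s₀) ℝ) :
    (ℤ × ℤ × Fin s₀) → (ℤ × ℤ × Fin s₀) → ℝ≥0∞ :=
  fun y y' => ENNReal.ofReal (A (y'.1 - y.1) (y'.2.1 - y.2.1) y.2.2 y'.2.2)

/-- The substochastic kernel `P₊`, the restriction of `P` to `𝕊₊ = ℤ₊² × S₀`. -/
noncomputable def kerPlus (A : ℤ → ℤ → Matrix (Fin s₀) (Fin s₀) ℝ) :
    (ℕ × ℕ × Fin s₀) → (ℕ × ℕ × Fin s₀) → ℝ≥0∞ :=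
  fun y y' =>
    ENNReal.ofReal (A ((y'.1 : ℤ) - (y.1 : ℤ)) ((y'.2.1 : ℤ) - (y.2.1 : ℤ)) y.2.2 y'.2.2)

/-- The occupation measure: `q̃_{y,y'} = E[Σ_{n<τ} 1(Y_n = y') | Y₀ = y] = Σ_n [P₊ⁿ]_{y,y'}`,
the `(y,y')` entry of the fundamental matrix of `P₊`. -/
noncomputable def occ (A : ℤ → ℤ → Matrix (Fin s₀) (Fin s₀) ℝ) (y y' : ℕ × ℕ × Fin s₀) :
    ℝ≥0∞ :=
  ∑' n : ℕ, kpow (kerPlus A) n y y'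

/-- The expected exit time `E(τ | Y₀ = y) = Σ_{n≥0} P(τ > n | Y₀ = y)
= Σ_n Σ_{y'∈𝕊₊} [P₊ⁿ]_{y,y'}`. -/
noncomputable def Etau (A : ℤ → ℤ → Matrix (Fin s₀) (Fin s₀) ℝ) (y : ℕ × ℕ × Fin s₀) : ℝ≥0∞ :=
  ∑' n : ℕ, ∑' y' : ℕ × ℕ × Fin s₀, kpow (kerPlus A) n y y'

/-- Assumption 1: `{Y_n}` is irreducible and aperiodic (equivalently, primitive). -/
def Assumption1 (A : ℤ → ℤ → Matrix (Fin s₀) (Fin s₀) ℝ) : Prop :=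
  ∀ y y' : ℤ × ℤ × Fin s₀, ∃ N : ℕ, ∀ n ≥ N, 0 < kpow (ker A) n y y'

/-- Assumption 3: the substochastic matrix `P₊` is irreducible. -/
def Assumption3 (A : ℤ → ℤ → Matrix (Fin s₀) (Fin s₀) ℝ) : Prop :=
  ∀ y y' : ℕ × ℕ × Fin s₀, ∃ n : ℕ, 1 ≤ n ∧ 0 < kpow (kerPlus A) n y y'

/-- Mean drift `a₁ = π_{*,*}(−A_{−1,*}+A_{1,*})𝟏` in the first coordinate. -/
noncomputable def a1 (A : ℤ → ℤ → Matrix (Fin s₀) (Fin s₀) ℝ) (π : Fin s₀ → ℝ) : ℝ :=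
  ∑ a, π a * ∑ b, ∑ k ∈ Finset.Icc (-1 : ℤ) 1, (A 1 k a b - A (-1) k a b)

/-- Mean drift `a₂ = π_{*,*}(−A_{*,−1}+A_{*,1})𝟏` in the second coordinate. -/
noncomputable def a2 (A : ℤ → ℤ → Matrix (Fin s₀) (Fin s₀) ℝ) (π : Fin s₀ → ℝ) : ℝ :=
  ∑ a, π a * ∑ b, ∑ k ∈ Finset.Icc (-1 : ℤ) 1, (A k 1 a b - A k (-1) a b)

/-- `π` is the stationary distribution of the stochastic matrix `A_{*,*} = Σ_{i,j} A_{i,j}`. -/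
def IsStationary (A : ℤ → ℤ → Matrix (Fin s₀) (Fin s₀) ℝ) (π : Fin s₀ → ℝ) : Prop :=
  (∀ a, 0 ≤ π a) ∧ (∑ a, π a = 1) ∧
    ∀ b, (∑ a, π a * ∑ i ∈ Finset.Icc (-1 : ℤ) 1, ∑ j ∈ Finset.Icc (-1 : ℤ) 1, A i j a b) = π b

/-- Assumption 2: `a₁ < 0` or `a₂ < 0`. -/
def Assumption2 (A : ℤ → ℤ → Matrix (Fin s₀) (Fin s₀) ℝ) : Prop :=
  ∃ π : Fin s₀ → ℝ, IsStationary A π ∧ (a1 A π < 0 ∨ a2 A π < 0)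

/-! ## Spectral radius and the sets Γ, Γ̄, 𝒟 -/

/-- Spectral radius (maximum modulus of the eigenvalues) of a complex matrix. -/
noncomputable def sprC (M : Matrix (Fin s₀) (Fin s₀) ℂ) : ℝ :=
  sSup ((fun z => ‖z‖) '' spectrum ℂ M)

/-- The matrix moment generating function `A_{*,*}(θ₁,θ₂) = Σ_{i,j} e^{iθ₁+jθ₂} A_{i,j}`. -/
noncomputable def Ass (A : ℤ → ℤ → Matrix (Fin s₀) (Fin s₀) ℝ) (θ₁ θ₂ : ℝ) :
    Matrix (Fin s₀) (Fin s₀) ℝ :=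
  ∑ i ∈ Finset.Icc (-1 : ℤ) 1, ∑ j ∈ Finset.Icc (-1 : ℤ) 1,
    Real.exp ((i : ℝ) * θ₁ + (j : ℝ) * θ₂) • A i j

/-- `χ(θ₁,θ₂) = spr(A_{*,*}(θ₁,θ₂))`. -/
noncomputable def chi (A : ℤ → ℤ → Matrix (Fin s₀) (Fin s₀) ℝ) (θ₁ θ₂ : ℝ) : ℝ :=
  sprC ((Ass A θ₁ θ₂).map Complex.ofReal)

/-- `Γ = {(θ₁,θ₂) : spr(A_{*,*}(θ₁,θ₂)) < 1}`. -/
def GammaSet (A : ℤ → ℤ → Matrix (Fin s₀) (Fin s₀) ℝ) : Set (ℝ × ℝ) :=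
  {θ | chi A θ.1 θ.2 < 1}

/-- `Γ̄ = {(θ₁,θ₂) : spr(A_{*,*}(θ₁,θ₂)) ≤ 1}`. -/
def GammaBar (A : ℤ → ℤ → Matrix (Fin s₀) (Fin s₀) ℝ) : Set (ℝ × ℝ) :=
  {θ | chi A θ.1 θ.2 ≤ 1}

/-- `𝒟 = {θ : θ < θ' componentwise for some θ' ∈ Γ}`. -/
def Dset (A : ℤ → ℤ → Matrix (Fin s₀) (Fin s₀) ℝ) : Set (ℝ × ℝ) :=
  {θ | ∃ θ' ∈ GammaSet A, θ.1 < θ'.1 ∧ θ.2 < θ'.2}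

/-! ## Moment generating function of the occupation measures and its domain -/

/-- `(j,j')`-entry of `Φ_x(θ₁,θ₂) = Σ_{k₁,k₂≥0} e^{k₁θ₁+k₂θ₂} N_{x,(k₁,k₂)}`. -/
noncomputable def Phi (A : ℤ → ℤ → Matrix (Fin s₀) (Fin s₀) ℝ) (x : ℕ × ℕ) (θ : ℝ × ℝ)
    (j j' : Fin s₀) : ℝ≥0∞ :=
  ∑' k : ℕ × ℕ, ENNReal.ofReal (Real.exp ((k.1 : ℝ) * θ.1 + (k.2 : ℝ) * θ.2)) *
    occ A (x.1, x.2, j) (k.1, k.2, j')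

/-- `𝒟_x`: the interior of the set where `Φ_x` is (entrywise) finite. -/
noncomputable def domPhi (A : ℤ → ℤ → Matrix (Fin s₀) (Fin s₀) ℝ) (x : ℕ × ℕ) : Set (ℝ × ℝ) :=
  interior {θ : ℝ × ℝ | ∀ j j', Phi A x θ j j' ≠ ⊤}

/-! ## QBD blocks and rate matrices -/

/-- Block `A^{(1)}_i`: matrix indexed by `ℤ₊ × S₀`, block tridiagonal with blocks `A_{i,·}`. -/
noncomputable def A1blk (A : ℤ → ℤ → Matrix (Fin s₀) (Fin s₀) ℝ) (i : ℤ) :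
    (ℕ × Fin s₀) → (ℕ × Fin s₀) → ℝ≥0∞ :=
  fun y y' => ENNReal.ofReal (A i ((y'.1 : ℤ) - (y.1 : ℤ)) y.2 y'.2)

/-- Block `A^{(2)}_i`: matrix indexed by `ℤ₊ × S₀`, block tridiagonal with blocks `A_{·,i}`. -/
noncomputable def A2blk (A : ℤ → ℤ → Matrix (Fin s₀) (Fin s₀) ℝ) (i : ℤ) :
    (ℕ × Fin s₀) → (ℕ × Fin s₀) → ℝ≥0∞ :=
  fun y y' => ENNReal.ofReal (A ((y'.1 : ℤ) - (y.1 : ℤ)) i y.2 y'.2)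

/-- Block `A^{(1,1)}_d`, indexed by the phase space `ℤ × S₀` of the QBD representation with
level `min{X₁,X₂}` and phase `(X₁−X₂, J)`: from a state with phase `k`, a jump `(i,l)` moves
the phase to `k+i−l` and the level by `min(max(k,0)+i, max(−k,0)+l)`. -/
noncomputable def A11blk (A : ℤ → ℤ → Matrix (Fin s₀) (Fin s₀) ℝ) (d : ℤ) :
    (ℤ × Fin s₀) → (ℤ × Fin s₀) → ℝ≥0∞ :=
  fun y y' => ∑ i ∈ Finset.Icc (-1 : ℤ) 1, ∑ l ∈ Finset.Icc (-1 : ℤ) 1,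
    if y'.1 = y.1 + i - l ∧ d = min (max y.1 0 + i) (max (-y.1) 0 + l) then
      ENNReal.ofReal (A i l y.2 y'.2) else 0

/-! ## Radii of convergence of the generating functions of the occupation measures -/

/-- Radius of convergence `r^{(1)}_{y,(x₂',j')}` of `Σ_k q̃_{y,(k,x₂',j')} z^k`. -/
noncomputable def r1 (A : ℤ → ℤ → Matrix (Fin s₀) (Fin s₀) ℝ) (y : ℕ × ℕ × Fin s₀)
    (x₂' : ℕ) (j' : Fin s₀) : ℝ≥0∞ :=
  sSup {r : ℝ≥0∞ | (∑' k : ℕ, r ^ k * occ A y (k, x₂', j')) ≠ ⊤}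

/-- Radius of convergence `r^{(2)}_{y,(x₁',j')}` of `Σ_k q̃_{y,(x₁',k,j')} z^k`. -/
noncomputable def r2 (A : ℤ → ℤ → Matrix (Fin s₀) (Fin s₀) ℝ) (y : ℕ × ℕ × Fin s₀)
    (x₁' : ℕ) (j' : Fin s₀) : ℝ≥0∞ :=
  sSup {r : ℝ≥0∞ | (∑' k : ℕ, r ^ k * occ A y (x₁', k, j')) ≠ ⊤}

/-- Radius of convergence `r^{(1,1)}_{(k,j),(k',j')}` of
`φ̂^{(1,1)}_{(k,j),(k',j')}(z) = Σ_l q̃_{(k∨0,−(k∧0),j),(l+(k'∨0),l−(k'∧0),j')} z^l`. -/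
noncomputable def r11 (A : ℤ → ℤ → Matrix (Fin s₀) (Fin s₀) ℝ) (k : ℤ) (j : Fin s₀)
    (k' : ℤ) (j' : Fin s₀) : ℝ≥0∞ :=
  sSup {r : ℝ≥0∞ | (∑' l : ℕ,
    r ^ l * occ A ((max k 0).toNat, (-(min k 0)).toNat, j)
      (l + (max k' 0).toNat, l + (-(min k' 0)).toNat, j')) ≠ ⊤}

/-! ## The complex matrix function Ĉ(z,w) -/

/-- `Ĉ(z,w) = Σ_{i,j∈{−1,0,1}} zⁱ wʲ A_{i,j}` as a complex matrix. -/
noncomputable def Chat (A : ℤ → ℤ → Matrix (Fin s₀) (Fin s₀) ℝ) (z w : ℂ) :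
    Matrix (Fin s₀) (Fin s₀) ℂ :=
  ∑ i ∈ Finset.Icc (-1 : ℤ) 1, ∑ j ∈ Finset.Icc (-1 : ℤ) 1,
    (z ^ i * w ^ j) • (A i j).map Complex.ofReal

/-! ## The lifted chain `ᶜY` (quotients and remainders mod `c`) -/

/-- The block `ᶜA_{i,j}` of the lifted 2d-MMRW, expressed via the original blocks:
`ᶜA_{i,j}((m₁,m₂,a),(m₁',m₂',b)) = A_{c₁ i + (m₁'−m₁), c₂ j + (m₂'−m₂)}(a,b)`. -/
noncomputable def cA (A : ℤ → ℤ → Matrix (Fin s₀) (Fin s₀) ℝ) (c₁ c₂ : ℕ) (i j : ℤ) :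
    Matrix (Fin c₁ × Fin c₂ × Fin s₀) (Fin c₁ × Fin c₂ × Fin s₀) ℝ :=
  Matrix.of fun y y' =>
    A ((c₁ : ℤ) * i + (((y'.1 : ℕ) : ℤ) - ((y.1 : ℕ) : ℤ)))
      ((c₂ : ℤ) * j + (((y'.2.1 : ℕ) : ℤ) - ((y.2.1 : ℕ) : ℤ))) y.2.2 y'.2.2

/-- `ᶜA_{*,*}(θ₁,θ₂) = Σ_{i,j} e^{iθ₁+jθ₂} ᶜA_{i,j}`. -/
noncomputable def cAss (A : ℤ → ℤ → Matrix (Fin s₀) (Fin s₀) ℝ) (c₁ c₂ : ℕ) (θ₁ θ₂ : ℝ) :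
    Matrix (Fin c₁ × Fin c₂ × Fin s₀) (Fin c₁ × Fin c₂ × Fin s₀) ℝ :=
  ∑ i ∈ Finset.Icc (-1 : ℤ) 1, ∑ j ∈ Finset.Icc (-1 : ℤ) 1,
    Real.exp ((i : ℝ) * θ₁ + (j : ℝ) * θ₂) • cA A c₁ c₂ i j



/-! ## Auxiliary material for the proof -/

section Aux

/-- Foster–Lyapunov criterion for finiteness of the expected exit time. -/
lemma foster {α : Type*} [DecidableEq α] (P : α → α → ℝ≥0∞)
    (V : α → ℝ≥0∞) (ε : ℝ≥0∞) (hε : ε ≠ 0) (hV : ∀ y, V y ≠ ⊤)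
    (hd : ∀ y, (∑' z, P y z * V z) + ε ≤ V y) (y : α) :
    (∑' n : ℕ, ∑' y', kpow P n y y') ≠ ⊤ := by
  set f : ℕ → α → ℝ≥0∞ := fun n y => ∑' y', kpow P n y y' * V y' with hf
  set m : ℕ → α → ℝ≥0∞ := fun n y => ∑' y', kpow P n y y' with hm
  have hf0 : ∀ y, f 0 y = V y := by
    intro y
    simp only [hf, kpow]
    rw [tsum_eq_single y]
    · simp
    · intro b hb
      simp [Ne.symm hb]
  have hm0 : ∀ y, m 0 y = 1 := by
    intro y
    simp only [hm, kpow]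
    rw [tsum_eq_single y]
    · simp
    · intro b hb
      simp [Ne.symm hb]
  have hfs : ∀ n y, f (n+1) y = ∑' z, P y z * f n z := by
    intro n y
    simp only [hf, kpow, kmul]
    have h1 : ∀ y' : α, (∑' k, P y k * kpow P n k y') * V y'
        = ∑' k, P y k * (kpow P n k y' * V y') := by
      intro y'
      rw [← ENNReal.tsum_mul_right]
      exact tsum_congr fun k => mul_assoc _ _ _
    rw [tsum_congr h1, ENNReal.tsum_comm]
    exact tsum_congr fun z => ENNReal.tsum_mul_left
  have hms : ∀ n y, m (n+1) y = ∑' z, P y z * m n z := by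
    intro n y
    simp only [hm, kpow, kmul]
    rw [ENNReal.tsum_comm]
    exact tsum_congr fun z => ENNReal.tsum_mul_left
  have key : ∀ n y, f (n+1) y + ε * m n y ≤ f n y := by
    intro n
    induction n with
    | zero =>
      intro y
      rw [hf0, hm0, mul_one]
      have h1 : f 1 y ≤ ∑' z, P y z * V z := by
        rw [hfs 0 y]
        exact ENNReal.tsum_le_tsum fun z => by rw [hf0]
      exact le_trans (add_le_add_left h1 ε) (hd y)
    | succ n ih =>
      intro y
      rw [hfs (n+1) y, hms n y, hfs n y, ← ENNReal.tsum_mul_left]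
      calc (∑' z, P y z * f (n+1) z) + ∑' z, ε * (P y z * m n z)
          = ∑' z, (P y z * f (n+1) z + ε * (P y z * m n z)) := (ENNReal.tsum_add).symm
        _ ≤ ∑' z, P y z * f n z := by
            apply ENNReal.tsum_le_tsum
            intro z
            calc P y z * f (n+1) z + ε * (P y z * m n z)
                = P y z * (f (n+1) z + ε * m n z) := by ring
              _ ≤ P y z * f n z := mul_le_mul_right (ih z) _
  have tel : ∀ N, ε * ∑ n ∈ Finset.range N, m n y + f N y ≤ f 0 y := by
    intro N
    induction N with
    | zero => simp
    | succ N ih =>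
      calc ε * ∑ n ∈ Finset.range (N+1), m n y + f (N+1) y
          = ε * ∑ n ∈ Finset.range N, m n y + (f (N+1) y + ε * m N y) := by
            rw [Finset.sum_range_succ]; ring
        _ ≤ ε * ∑ n ∈ Finset.range N, m n y + f N y := add_le_add_right (key N y) _
        _ ≤ f 0 y := ih
  have hsum : ε * ∑' n, m n y ≤ V y := by
    rw [ENNReal.tsum_eq_iSup_nat, ENNReal.mul_iSup]
    apply iSup_le
    intro N
    exact le_trans (le_add_right (le_refl _)) (le_trans (tel N) (le_of_eq (hf0 y)))
  intro htop
  rw [htop, ENNReal.mul_top hε] at hsum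
  exact hV y (top_le_iff.mp hsum)

lemma row_sum_pow {s₀ : ℕ} (M : Matrix (Fin s₀) (Fin s₀) ℝ)
    (hMrow : ∀ a, ∑ b, M a b = 1) (n : ℕ) : ∀ a, ∑ b, (M ^ n) a b = 1 := by
  induction n with
  | zero => intro a; simp [Matrix.one_apply, Finset.sum_ite_eq]
  | succ n ih =>
    intro a
    rw [pow_succ']
    simp only [Matrix.mul_apply]
    rw [Finset.sum_comm]
    calc ∑ c, ∑ b, M a c * (M ^ n) c b = ∑ c, M a c * ∑ b, (M ^ n) c b := by
          simp [Finset.mul_sum]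
      _ = 1 := by simp [ih, hMrow a]

lemma pow_nonneg_entries {s₀ : ℕ} (M : Matrix (Fin s₀) (Fin s₀) ℝ)
    (hMnn : ∀ a b, 0 ≤ M a b) (n : ℕ) : ∀ a b, 0 ≤ (M ^ n) a b := by
  induction n with
  | zero => intro a b; simp [Matrix.one_apply]; positivity
  | succ n ih =>
    intro a b
    rw [pow_succ', Matrix.mul_apply]
    exact Finset.sum_nonneg fun c _ => mul_nonneg (hMnn a c) (ih c b)

/-- Solvability of the Poisson equation for a primitive stochastic matrix. -/
lemma poisson {s₀ : ℕ} (hs : 0 < s₀) (M : Matrix (Fin s₀) (Fin s₀) ℝ)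
    (hMrow : ∀ a, ∑ b, M a b = 1)
    (hprim : ∃ n, ∀ a b, 0 < (M ^ n) a b)
    (π : Fin s₀ → ℝ) (hπ1 : ∑ a, π a = 1) (hπs : ∀ b, ∑ a, π a * M a b = π b)
    (u : Fin s₀ → ℝ) (hu : ∑ a, π a * u a = 0) :
    ∃ h : Fin s₀ → ℝ, ∀ a, h a - ∑ b, M a b * h b = u a := by
  haveI : Nonempty (Fin s₀) := ⟨⟨0, hs⟩⟩
  set T : (Fin s₀ → ℝ) →ₗ[ℝ] (Fin s₀ → ℝ) := LinearMap.id - M.mulVecLin with hT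
  set φ : (Fin s₀ → ℝ) →ₗ[ℝ] ℝ :=
    { toFun := fun v => ∑ a, π a * v a
      map_add' := by intro v w; simp [mul_add, Finset.sum_add_distrib]
      map_smul' := by
        intro c v; simp [Finset.mul_sum]; ring_nf; simp [mul_comm, mul_left_comm] } with hφ
  have hone : (fun _ => (1:ℝ)) ∈ LinearMap.ker T := by
    simp only [hT, LinearMap.mem_ker, LinearMap.sub_apply, LinearMap.id_apply,
      Matrix.mulVecLin_apply]
    funext a
    simp [Matrix.mulVec, dotProduct, hMrow a]
  have hker : LinearMap.ker T = Submodule.span ℝ {(fun _ => (1:ℝ))} := by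
    apply le_antisymm
    · intro v hv
      obtain ⟨n, hn⟩ := hprim
      have hMv : M.mulVec v = v := by
        have := hv
        simp only [hT, LinearMap.mem_ker, LinearMap.sub_apply, LinearMap.id_apply,
          Matrix.mulVecLin_apply] at this
        have h0 : v - M.mulVec v = 0 := this
        exact (sub_eq_zero.mp h0).symm
      have hpowv : (M ^ n).mulVec v = v := by
        clear hn
        induction n with
        | zero => simp
        | succ n ih => rw [pow_succ', ← Matrix.mulVec_mulVec, ih, hMv]
      obtain ⟨a, ha⟩ := Finite.exists_max v
      have hzero : ∑ b, (M ^ n) a b * (v a - v b) = 0 := by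
        have h1 : ∑ b, (M ^ n) a b * v b = v a := by
          have := congrFun hpowv a
          simpa [Matrix.mulVec, dotProduct] using this
        calc ∑ b, (M ^ n) a b * (v a - v b)
            = (∑ b, (M ^ n) a b) * v a - ∑ b, (M ^ n) a b * v b := by
              rw [Finset.sum_mul, ← Finset.sum_sub_distrib]
              congr 1; ext b; ring
          _ = 0 := by rw [row_sum_pow M hMrow n a, h1]; ring
      have hconst : ∀ b, v b = v a := by
        intro b
        have heach := (Finset.sum_eq_zero_iff_of_nonneg
          (fun b _ => mul_nonneg (le_of_lt (hn a b)) (sub_nonneg.mpr (ha b)))).mp hzero b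
          (Finset.mem_univ b)
        rcases mul_eq_zero.mp heach with h | h
        · exact absurd h (ne_of_gt (hn a b))
        · linarith [sub_eq_zero.mp h]
      rw [Submodule.mem_span_singleton]
      exact ⟨v a, by funext b; simp [hconst b]⟩
    · rw [Submodule.span_le]
      intro x hx
      rcases hx with rfl
      exact hone
  have hker_rank : Module.finrank ℝ (LinearMap.ker T) = 1 := by
    rw [hker]
    exact finrank_span_singleton (by
      intro h
      have := congrFun h ⟨0, hs⟩
      simp at this)
  have hrange_le : LinearMap.range T ≤ LinearMap.ker φ := by
    rintro x ⟨v, rfl⟩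
    simp only [LinearMap.mem_ker, hφ, hT, LinearMap.sub_apply, LinearMap.id_apply,
      Matrix.mulVecLin_apply, LinearMap.coe_mk, AddHom.coe_mk]
    have e : ∑ a, π a * (v a - M.mulVec v a)
        = ∑ a, π a * v a - ∑ b, (∑ a, π a * M a b) * v b := by
      simp only [Matrix.mulVec, dotProduct, mul_sub, Finset.mul_sum,
        Finset.sum_sub_distrib]
      congr 1
      rw [Finset.sum_comm]
      refine Finset.sum_congr rfl fun b _ => ?_
      rw [Finset.sum_mul]
      exact Finset.sum_congr rfl fun a _ => by ring
    rw [show (∑ a : Fin s₀, π a * (v - M.mulVec v) a)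
        = ∑ a, π a * (v a - M.mulVec v a) from rfl, e]
    simp [hπs]
  have hpi : Module.finrank ℝ (Fin s₀ → ℝ) = s₀ := by simp
  have hrange_rank : Module.finrank ℝ (LinearMap.range T) + 1 = s₀ := by
    have h1 := LinearMap.finrank_range_add_finrank_ker T
    rw [hker_rank, hpi] at h1
    exact h1
  have hones : φ (fun _ => (1:ℝ)) = 1 := by simp [hφ, hπ1]
  have hφ_surj : LinearMap.range φ = ⊤ := by
    rw [LinearMap.range_eq_top]
    intro r
    refine ⟨r • (fun _ => (1:ℝ)), ?_⟩
    rw [map_smul, hones]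
    simp
  have hkerφ_rank : Module.finrank ℝ (LinearMap.ker φ) + 1 = s₀ := by
    have h2 := LinearMap.finrank_range_add_finrank_ker φ
    rw [hφ_surj, hpi] at h2
    simp only [finrank_top] at h2
    have : Module.finrank ℝ ℝ = 1 := Module.finrank_self ℝ
    omega
  have heq : LinearMap.range T = LinearMap.ker φ :=
    Submodule.eq_of_le_of_finrank_eq hrange_le (by omega)
  have hu' : u ∈ LinearMap.ker φ := by
    simp only [LinearMap.mem_ker, hφ, LinearMap.coe_mk, AddHom.coe_mk]
    exact hu
  rw [← heq] at hu'
  obtain ⟨h, hh⟩ := hu'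
  refine ⟨h, fun a => ?_⟩
  have := congrFun hh a
  simp only [hT, LinearMap.sub_apply, LinearMap.id_apply, Matrix.mulVecLin_apply,
    Pi.sub_apply, Matrix.mulVec, dotProduct] at this
  exact this

/-- The phase-marginal matrix `A_{*,*}`. -/
noncomputable def Mss (A : ℤ → ℤ → Matrix (Fin s₀) (Fin s₀) ℝ) :
    Matrix (Fin s₀) (Fin s₀) ℝ :=
  Matrix.of fun a b => ∑ i ∈ Finset.Icc (-1 : ℤ) 1, ∑ j ∈ Finset.Icc (-1 : ℤ) 1, A i j a b

lemma Mss_nonneg {A : ℤ → ℤ → Matrix (Fin s₀) (Fin s₀) ℝ} (hA : IsMMRW A) :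
    ∀ a b, 0 ≤ Mss A a b := by
  intro a b
  show (0:ℝ) ≤ ∑ i ∈ Finset.Icc (-1 : ℤ) 1, ∑ j ∈ Finset.Icc (-1 : ℤ) 1, A i j a b
  exact Finset.sum_nonneg fun i _ => Finset.sum_nonneg fun j _ => hA.nonneg i j a b

lemma Mss_row {A : ℤ → ℤ → Matrix (Fin s₀) (Fin s₀) ℝ} (hA : IsMMRW A) :
    ∀ a, ∑ b, Mss A a b = 1 := by
  intro a
  have := hA.stochastic a
  rw [← this]
  simp only [Mss, Matrix.of_apply]
  rw [Finset.sum_comm]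
  refine Finset.sum_congr rfl fun i _ => ?_
  rw [Finset.sum_comm]

lemma Mss_entry_le {A : ℤ → ℤ → Matrix (Fin s₀) (Fin s₀) ℝ} (hA : IsMMRW A)
    {i j : ℤ} (hi : i ∈ Finset.Icc (-1:ℤ) 1) (hj : j ∈ Finset.Icc (-1:ℤ) 1) (a b : Fin s₀) :
    A i j a b ≤ Mss A a b := by
  calc A i j a b ≤ ∑ l ∈ Finset.Icc (-1:ℤ) 1, A i l a b :=
        Finset.single_le_sum (fun l _ => hA.nonneg i l a b) hj
    _ ≤ Mss A a b :=
        Finset.single_le_sum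
          (f := fun k => ∑ l ∈ Finset.Icc (-1:ℤ) 1, A k l a b)
          (fun k _ => Finset.sum_nonneg fun l _ => hA.nonneg k l a b) hi

lemma ker_pos_phase {A : ℤ → ℤ → Matrix (Fin s₀) (Fin s₀) ℝ} (hA : IsMMRW A)
    {x z : ℤ × ℤ × Fin s₀} (h : ker A x z ≠ 0) : 0 < Mss A x.2.2 z.2.2 := by
  have hpos : 0 < A (z.1 - x.1) (z.2.1 - x.2.1) x.2.2 z.2.2 := by
    by_contra hc
    push_neg at hc
    exact h (by simp [ker, ENNReal.ofReal_eq_zero.mpr hc])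
  have hi : (z.1 - x.1) ∈ Finset.Icc (-1:ℤ) 1 := by
    by_contra hc
    rw [hA.skipfree _ _ (Or.inl hc)] at hpos
    simp at hpos
  have hj : (z.2.1 - x.2.1) ∈ Finset.Icc (-1:ℤ) 1 := by
    by_contra hc
    rw [hA.skipfree _ _ (Or.inr hc)] at hpos
    simp at hpos
  exact lt_of_lt_of_le hpos (Mss_entry_le hA hi hj _ _)

lemma kpow_pos_to_M {A : ℤ → ℤ → Matrix (Fin s₀) (Fin s₀) ℝ} (hA : IsMMRW A)
    (n : ℕ) : ∀ x y : ℤ × ℤ × Fin s₀, 0 < kpow (ker A) n x y →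
      0 < (Mss A ^ n) x.2.2 y.2.2 := by
  induction n with
  | zero =>
    intro x y h
    simp only [kpow] at h
    by_cases hxy : x = y
    · subst hxy; simp [Matrix.one_apply]
    · simp [hxy] at h
  | succ n ih =>
    intro x y h
    simp only [kpow, kmul] at h
    have : ∃ z, ker A x z * kpow (ker A) n z y ≠ 0 := by
      by_contra hc
      push_neg at hc
      rw [ENNReal.tsum_eq_zero.mpr hc] at h
      exact lt_irrefl 0 h
    obtain ⟨z, hz⟩ := this
    have h1 : ker A x z ≠ 0 := fun h0 => hz (by rw [h0, zero_mul])
    have h2 : kpow (ker A) n z y ≠ 0 := fun h0 => hz (by rw [h0, mul_zero])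
    have hM1 : 0 < Mss A x.2.2 z.2.2 := ker_pos_phase hA h1
    have hM2 : 0 < (Mss A ^ n) z.2.2 y.2.2 := ih z y (pos_iff_ne_zero.mpr h2)
    rw [pow_succ', Matrix.mul_apply]
    calc (0:ℝ) < Mss A x.2.2 z.2.2 * (Mss A ^ n) z.2.2 y.2.2 := mul_pos hM1 hM2
      _ ≤ ∑ c, Mss A x.2.2 c * (Mss A ^ n) c y.2.2 :=
        Finset.single_le_sum
          (f := fun c => Mss A x.2.2 c * (Mss A ^ n) c y.2.2)
          (fun c _ => mul_nonneg (Mss_nonneg hA _ _)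
            (pow_nonneg_entries _ (Mss_nonneg hA) n _ _)) (Finset.mem_univ z.2.2)

lemma Mss_primitive {A : ℤ → ℤ → Matrix (Fin s₀) (Fin s₀) ℝ} (hA : IsMMRW A)
    (h1 : Assumption1 A) : ∃ n, ∀ a b, 0 < (Mss A ^ n) a b := by
  have hch : ∀ p : Fin s₀ × Fin s₀, ∃ N : ℕ, ∀ n ≥ N,
      0 < kpow (ker A) n ((0:ℤ), (0:ℤ), p.1) ((0:ℤ), (0:ℤ), p.2) := fun p => h1 _ _
  choose N hN using hch
  refine ⟨Finset.univ.sup N, fun a b => ?_⟩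
  exact kpow_pos_to_M hA _ _ _
    (hN (a, b) _ (Finset.le_sup (Finset.mem_univ _)))

/-- First-coordinate conditional drift. -/
noncomputable def d1 (A : ℤ → ℤ → Matrix (Fin s₀) (Fin s₀) ℝ) (a : Fin s₀) : ℝ :=
  ∑ b, ∑ k ∈ Finset.Icc (-1 : ℤ) 1, (A 1 k a b - A (-1) k a b)

lemma icc_expand (f : ℤ → ℝ) :
    ∑ i ∈ Finset.Icc (-1:ℤ) 1, f i = f (-1) + f 0 + f 1 := by
  rw [show Finset.Icc (-1:ℤ) 1 = {-1, 0, 1} from by decide]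
  rw [show ({-1,0,1} : Finset ℤ) = insert (-1) (insert 0 {1}) from rfl,
    Finset.sum_insert (by decide), Finset.sum_insert (by decide), Finset.sum_singleton]
  ring

/-- The pointwise Foster drift inequality for the killed kernel `P₊`. -/
lemma drift1 {A : ℤ → ℤ → Matrix (Fin s₀) (Fin s₀) ℝ} (hA : IsMMRW A)
    (g : Fin s₀ → ℝ) (hg : ∀ j, 1 ≤ g j) (α : ℝ) (hα : α < 0)
    (hp : ∀ a, ∑ b, Mss A a b * g b = g a - d1 A a + α)
    (x₁ x₂ : ℕ) (j : Fin s₀) :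
    (∑' y' : ℕ × ℕ × Fin s₀, kerPlus A (x₁, x₂, j) y' *
        ENNReal.ofReal ((y'.1 : ℝ) + g y'.2.2)) + ENNReal.ofReal (-(max α (-1)))
      ≤ ENNReal.ofReal ((x₁ : ℝ) + g j) := by
  set G : ℤ × ℤ × Fin s₀ → ℝ≥0∞ := fun z =>
    ENNReal.ofReal (A (z.1 - (x₁:ℤ)) (z.2.1 - (x₂:ℤ)) j z.2.2) *
      ENNReal.ofReal (((z.1 : ℤ) : ℝ) + g z.2.2) with hG
  have stepA : (∑' y' : ℕ × ℕ × Fin s₀, kerPlus A (x₁, x₂, j) y' *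
      ENNReal.ofReal ((y'.1 : ℝ) + g y'.2.2)) ≤ ∑' z : ℤ × ℤ × Fin s₀, G z := by
    have hinj : Function.Injective (fun y : ℕ × ℕ × Fin s₀ =>
        (((y.1 : ℤ), (y.2.1 : ℤ), y.2.2) : ℤ × ℤ × Fin s₀)) := by
      intro a b h
      simp only [Prod.mk.injEq] at h
      obtain ⟨h1, h2, h3⟩ := h
      exact Prod.ext (by exact_mod_cast h1) (Prod.ext (by exact_mod_cast h2) h3)
    have := ENNReal.tsum_comp_le_tsum_of_injective hinj G
    refine le_trans (le_of_eq (tsum_congr fun y => ?_)) this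
    simp only [hG, kerPlus]
    norm_cast
  set F : Finset (ℤ × ℤ × Fin s₀) :=
    Finset.Icc ((x₁:ℤ)-1) ((x₁:ℤ)+1) ×ˢ Finset.Icc ((x₂:ℤ)-1) ((x₂:ℤ)+1) ×ˢ Finset.univ
    with hF
  have stepB : ∑' z : ℤ × ℤ × Fin s₀, G z = ∑ z ∈ F, G z := by
    apply tsum_eq_sum
    intro z hz
    have : z.1 ∉ Finset.Icc ((x₁:ℤ)-1) ((x₁:ℤ)+1) ∨
        z.2.1 ∉ Finset.Icc ((x₂:ℤ)-1) ((x₂:ℤ)+1) := by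
      by_contra hc
      push_neg at hc
      exact hz (by
        rw [hF, Finset.mem_product, Finset.mem_product]
        exact ⟨hc.1, hc.2, Finset.mem_univ _⟩)
    have hA0 : A (z.1 - (x₁:ℤ)) (z.2.1 - (x₂:ℤ)) = 0 := by
      apply hA.skipfree
      rcases this with h | h
      · left; simp only [Finset.mem_Icc] at h ⊢; omega
      · right; simp only [Finset.mem_Icc] at h ⊢; omega
    simp [hG, hA0]
  set P : Finset (ℤ × ℤ × Fin s₀) :=
    Finset.Icc (-1:ℤ) 1 ×ˢ Finset.Icc (-1:ℤ) 1 ×ˢ Finset.univ with hP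
  have stepC : ∑ z ∈ F, G z = ∑ w ∈ P, ENNReal.ofReal (A w.1 w.2.1 j w.2.2) *
      ENNReal.ofReal ((x₁:ℝ) + (w.1 : ℝ) + g w.2.2) := by
    apply Finset.sum_nbij' (i := fun z => (z.1 - (x₁:ℤ), z.2.1 - (x₂:ℤ), z.2.2))
      (j := fun w => ((x₁:ℤ) + w.1, (x₂:ℤ) + w.2.1, w.2.2))
    · intro z hz
      rw [hF, Finset.mem_product, Finset.mem_product] at hz
      rw [hP, Finset.mem_product, Finset.mem_product]
      refine ⟨?_, ?_, Finset.mem_univ _⟩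
      · simp only [Finset.mem_Icc] at hz ⊢; omega
      · simp only [Finset.mem_Icc] at hz ⊢
        have := hz.2.1
        omega
    · intro w hw
      rw [hP, Finset.mem_product, Finset.mem_product] at hw
      rw [hF, Finset.mem_product, Finset.mem_product]
      refine ⟨?_, ?_, Finset.mem_univ _⟩
      · simp only [Finset.mem_Icc] at hw ⊢; omega
      · simp only [Finset.mem_Icc] at hw ⊢
        have := hw.2.1
        omega
    · intro z _
      refine Prod.ext (by ring) (Prod.ext (by simp) rfl)
    · intro w _
      refine Prod.ext (by ring) (Prod.ext (by simp) rfl)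
    · intro z _
      simp only [hG]
      congr 2
      push_cast
      ring
  have stepD : ∑ w ∈ P, ENNReal.ofReal (A w.1 w.2.1 j w.2.2) *
      ENNReal.ofReal ((x₁:ℝ) + (w.1 : ℝ) + g w.2.2)
      = ENNReal.ofReal (∑ w ∈ P, A w.1 w.2.1 j w.2.2 * ((x₁:ℝ) + (w.1 : ℝ) + g w.2.2)) := by
    rw [ENNReal.ofReal_sum_of_nonneg]
    · refine Finset.sum_congr rfl fun w hw => ?_
      rw [ENNReal.ofReal_mul (hA.nonneg _ _ _ _)]
    · intro w hw
      rw [hP, Finset.mem_product] at hw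
      have hw1 : (-1:ℤ) ≤ w.1 := (Finset.mem_Icc.mp hw.1).1
      have : (0:ℝ) ≤ (x₁:ℝ) + (w.1:ℝ) + g w.2.2 := by
        have h1 : (-1:ℝ) ≤ (w.1:ℝ) := by exact_mod_cast hw1
        have h2 := hg w.2.2
        have hx : (0:ℝ) ≤ (x₁:ℝ) := Nat.cast_nonneg x₁
        linarith
      exact mul_nonneg (hA.nonneg _ _ _ _) this
  have stepE : ∑ w ∈ P, A w.1 w.2.1 j w.2.2 * ((x₁:ℝ) + (w.1 : ℝ) + g w.2.2)
      = (x₁:ℝ) + g j + α := by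
    have hsplit : ∑ w ∈ P, A w.1 w.2.1 j w.2.2 * ((x₁:ℝ) + (w.1 : ℝ) + g w.2.2)
        = ∑ i ∈ Finset.Icc (-1:ℤ) 1, (((x₁:ℝ) + (i:ℝ)) *
            (∑ l ∈ Finset.Icc (-1:ℤ) 1, ∑ b, A i l j b) +
          ∑ l ∈ Finset.Icc (-1:ℤ) 1, ∑ b, A i l j b * g b) := by
      rw [hP, Finset.sum_product]
      refine Finset.sum_congr rfl fun i _ => ?_
      rw [Finset.sum_product]
      rw [Finset.mul_sum, ← Finset.sum_add_distrib]
      refine Finset.sum_congr rfl fun l _ => ?_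
      rw [Finset.mul_sum, ← Finset.sum_add_distrib]
      refine Finset.sum_congr rfl fun b _ => ?_
      ring
    rw [hsplit]
    set T : ℤ → ℝ := fun i => ∑ l ∈ Finset.Icc (-1:ℤ) 1, ∑ b, A i l j b with hT
    set TG : ℤ → ℝ := fun i => ∑ l ∈ Finset.Icc (-1:ℤ) 1, ∑ b, A i l j b * g b with hTG
    have hstoch : T (-1) + T 0 + T 1 = 1 := by
      rw [← icc_expand T]
      exact hA.stochastic j
    have hMg : TG (-1) + TG 0 + TG 1 = g j - d1 A j + α := by
      rw [← icc_expand TG, ← hp j]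
      simp only [hTG, Mss, Matrix.of_apply]
      calc ∑ i ∈ Finset.Icc (-1:ℤ) 1, ∑ l ∈ Finset.Icc (-1:ℤ) 1, ∑ b, A i l j b * g b
          = ∑ i ∈ Finset.Icc (-1:ℤ) 1, ∑ b, ∑ l ∈ Finset.Icc (-1:ℤ) 1, A i l j b * g b :=
            Finset.sum_congr rfl fun i _ => Finset.sum_comm
        _ = ∑ b, ∑ i ∈ Finset.Icc (-1:ℤ) 1, ∑ l ∈ Finset.Icc (-1:ℤ) 1, A i l j b * g b :=
            Finset.sum_comm
        _ = ∑ b, (∑ i ∈ Finset.Icc (-1:ℤ) 1, ∑ l ∈ Finset.Icc (-1:ℤ) 1, A i l j b) * g b := by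
            refine Finset.sum_congr rfl fun b _ => ?_
            rw [Finset.sum_mul]
            refine Finset.sum_congr rfl fun i _ => ?_
            rw [Finset.sum_mul]
    have hd : d1 A j = T 1 - T (-1) := by
      simp only [d1, hT, Finset.sum_sub_distrib]
      congr 1
      · exact Finset.sum_comm
      · exact Finset.sum_comm
    rw [icc_expand (fun i => ((x₁:ℝ) + (i:ℝ)) * T i + TG i)]
    push_cast
    linear_combination (x₁:ℝ) * hstoch + hMg - hd
  calc (∑' y' : ℕ × ℕ × Fin s₀, kerPlus A (x₁, x₂, j) y' *
        ENNReal.ofReal ((y'.1 : ℝ) + g y'.2.2)) + ENNReal.ofReal (-(max α (-1)))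
      ≤ ENNReal.ofReal ((x₁:ℝ) + g j + α) + ENNReal.ofReal (-(max α (-1))) := by
        apply add_le_add_left
        refine le_trans stepA (le_of_eq ?_)
        rw [stepB, stepC, stepD, stepE]
    _ ≤ ENNReal.ofReal ((x₁:ℝ) + g j + max α (-1)) + ENNReal.ofReal (-(max α (-1))) := by
        apply add_le_add_left
        apply ENNReal.ofReal_le_ofReal
        have : α ≤ max α (-1) := le_max_left _ _
        linarith
    _ = ENNReal.ofReal ((x₁:ℝ) + g j) := by
        rw [← ENNReal.ofReal_add]
        · congr 1; ring
        · have h1 : (-1:ℝ) ≤ max α (-1) := le_max_right _ _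
          have h2 := hg j
          have hx : (0:ℝ) ≤ (x₁:ℝ) := Nat.cast_nonneg x₁
          linarith
        · rw [neg_nonneg]
          exact max_le hα.le (by norm_num)

/-- Main lemma: finiteness of the expected exit time, under a negative mean drift
in the first coordinate. -/
lemma main1 (hs : 0 < s₀) {A : ℤ → ℤ → Matrix (Fin s₀) (Fin s₀) ℝ} (hA : IsMMRW A)
    (hprim : ∃ n, ∀ a b, 0 < (Mss A ^ n) a b)
    (π : Fin s₀ → ℝ) (hπ1 : ∑ a, π a = 1)
    (hπs : ∀ b, ∑ a, π a * Mss A a b = π b)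
    (ha : ∑ a, π a * d1 A a < 0) :
    ∀ y : ℕ × ℕ × Fin s₀,
      (∑' n : ℕ, ∑' y' : ℕ × ℕ × Fin s₀, kpow (kerPlus A) n y y') ≠ ⊤ := by
  haveI : Nonempty (Fin s₀) := ⟨⟨0, hs⟩⟩
  set α : ℝ := ∑ a, π a * d1 A a with hαdef
  obtain ⟨h, hh⟩ := poisson hs (Mss A) (Mss_row hA) hprim π hπ1 hπs
    (fun a => d1 A a - α)
    (by
      have : ∀ a, π a * (d1 A a - α) = π a * d1 A a - π a * α := fun a => mul_sub _ _ _
      rw [Finset.sum_congr rfl fun a _ => this a, Finset.sum_sub_distrib,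
        ← Finset.sum_mul, hπ1]
      simp [hαdef])
  set C : ℝ := 1 + Finset.univ.sup' (Finset.univ_nonempty) (fun a => -h a) with hC
  set g : Fin s₀ → ℝ := fun a => h a + C with hgdef
  have hg : ∀ a, 1 ≤ g a := by
    intro a
    have := Finset.le_sup' (fun a => -h a) (Finset.mem_univ a)
    simp only [hgdef, hC]
    linarith
  have hp : ∀ a, ∑ b, Mss A a b * g b = g a - d1 A a + α := by
    intro a
    have e1 : ∑ b, Mss A a b * g b = ∑ b, Mss A a b * h b + (∑ b, Mss A a b) * C := by
      simp only [hgdef, mul_add]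
      rw [Finset.sum_add_distrib, Finset.sum_mul]
    rw [e1, Mss_row hA a]
    have := hh a
    simp only [hgdef]
    linarith
  have hεpos : (0:ℝ) < -(max α (-1)) := by
    rw [lt_neg, neg_zero]
    exact max_lt ha (by norm_num)
  intro y
  apply foster (kerPlus A)
    (fun y' => ENNReal.ofReal ((y'.1 : ℝ) + g y'.2.2))
    (ENNReal.ofReal (-(max α (-1))))
  · exact (ENNReal.ofReal_pos.mpr hεpos).ne'
  · intro y'
    exact ENNReal.ofReal_ne_top
  · rintro ⟨x₁, x₂, j⟩
    exact drift1 hA g hg α ha hp x₁ x₂ j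

/-- The coordinate swap on `𝕊₊`. -/
def swE : (ℕ × ℕ × Fin s₀) ≃ (ℕ × ℕ × Fin s₀) where
  toFun y := (y.2.1, y.1, y.2.2)
  invFun y := (y.2.1, y.1, y.2.2)
  left_inv y := rfl
  right_inv y := rfl

lemma kpow_swap (A : ℤ → ℤ → Matrix (Fin s₀) (Fin s₀) ℝ) (n : ℕ) :
    ∀ y y' : ℕ × ℕ × Fin s₀,
      kpow (kerPlus (fun i j => A j i)) n (swE y) (swE y') = kpow (kerPlus A) n y y' := by
  induction n with
  | zero =>
    intro y y'
    simp only [kpow]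
    by_cases hxy : y = y'
    · subst hxy; simp
    · rw [if_neg hxy, if_neg (fun h => hxy (swE.injective h))]
  | succ n ih =>
    intro y y'
    simp only [kpow, kmul]
    rw [← Equiv.tsum_eq (swE (s₀ := s₀))
      (fun z => kerPlus (fun i j => A j i) (swE y) z *
        kpow (kerPlus (fun i j => A j i)) n z (swE y'))]
    refine tsum_congr fun w => ?_
    rw [ih w y']
    rfl

end Aux

/-- Proposition 2.1: under Assumptions 1 and 3, if `a₁ < 0` or `a₂ < 0`,
then for every `y ∈ 𝕊₊` the occupation measure is finite; more precisely,
`Σ_{y'∈𝕊₊} q̃_{y,y'} = E(τ | Y₀ = y) < ∞`. -/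
theorem occupation_measure_finite {s₀ : ℕ} (hs : 0 < s₀)
    (A : ℤ → ℤ → Matrix (Fin s₀) (Fin s₀) ℝ) (hA : IsMMRW A)
    (h1 : Assumption1 A) (h3 : Assumption3 A)
    (π : Fin s₀ → ℝ) (hπ : IsStationary A π) (ha : a1 A π < 0 ∨ a2 A π < 0) :
    ∀ y : ℕ × ℕ × Fin s₀,
      (∑' y' : ℕ × ℕ × Fin s₀, occ A y y') = Etau A y ∧
      (∑' y' : ℕ × ℕ × Fin s₀, occ A y y') ≠ ⊤ := by
  intro y
  have hswap : ∀ y : ℕ × ℕ × Fin s₀,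
      (∑' y' : ℕ × ℕ × Fin s₀, occ A y y') = Etau A y := by
    intro y
    simp only [occ, Etau]
    exact ENNReal.tsum_comm
  refine ⟨hswap y, ?_⟩
  rw [hswap y]
  have hprim := Mss_primitive hA h1
  rcases ha with ha | ha
  · exact main1 hs hA hprim π hπ.2.1 (fun b => hπ.2.2 b) ha y
  · -- swap the two coordinates
    set B : ℤ → ℤ → Matrix (Fin s₀) (Fin s₀) ℝ := fun i j => A j i with hB
    have hAB : IsMMRW B := by
      refine ⟨fun i j a b => hA.nonneg j i a b, fun i j hij => hA.skipfree j i ?_, fun a => ?_⟩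
      · tauto
      · rw [Finset.sum_comm]
        exact hA.stochastic a
    have hMB : Mss B = Mss A := by
      funext a b
      simp only [Mss, Matrix.of_apply, hB]
      exact Finset.sum_comm
    have hprimB : ∃ n, ∀ a b, 0 < (Mss B ^ n) a b := by rw [hMB]; exact hprim
    have hπsB : ∀ b, ∑ a, π a * Mss B a b = π b := by
      intro b
      rw [hMB]
      exact hπ.2.2 b
    have haB : ∑ a, π a * d1 B a < 0 := ha
    have hEt : Etau A y = ∑' n : ℕ, ∑' y' : ℕ × ℕ × Fin s₀, kpow (kerPlus B) n (swE y) y' := by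
      simp only [Etau]
      refine tsum_congr fun n => ?_
      rw [← Equiv.tsum_eq (swE (s₀ := s₀)) (fun y' => kpow (kerPlus B) n (swE y) y')]
      exact tsum_congr fun y' => (kpow_swap A n y y').symm
    rw [hEt]
    exact main1 hs hAB hprimB π hπ.2.1 hπsB haB (swE y)
end MMRW2d
end

section
/- Under Assumption 1, the closed convex set Γ̄={(θ₁,θ₂)∈ℝ²: χ(θ₁,θ₂)≤1} is bounded. -/
open scoped ENNReal

namespace MMRW2d

variable {s₀ : ℕ}

section ProofAux

open Matrix Polynomial

variable {A : ℤ → ℤ → Matrix (Fin s₀) (Fin s₀) ℝ}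

private lemma Ass_apply (A : ℤ → ℤ → Matrix (Fin s₀) (Fin s₀) ℝ) (θ₁ θ₂ : ℝ) (a b : Fin s₀) :
    Ass A θ₁ θ₂ a b = ∑ i ∈ Finset.Icc (-1 : ℤ) 1, ∑ j ∈ Finset.Icc (-1 : ℤ) 1,
      Real.exp ((i : ℝ) * θ₁ + (j : ℝ) * θ₂) * A i j a b := by
  simp [Ass, Matrix.sum_apply, smul_eq_mul]

private lemma Ass_nonneg (hA : IsMMRW A) (θ₁ θ₂ : ℝ) (a b : Fin s₀) :
    0 ≤ Ass A θ₁ θ₂ a b := by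
  rw [Ass_apply]
  exact Finset.sum_nonneg fun i _ => Finset.sum_nonneg fun j _ =>
    mul_nonneg (Real.exp_pos _).le (hA.nonneg _ _ _ _)

private lemma le_Ass (hA : IsMMRW A) {i j : ℤ} (hi : i ∈ Finset.Icc (-1 : ℤ) 1)
    (hj : j ∈ Finset.Icc (-1 : ℤ) 1) (θ₁ θ₂ : ℝ) (a b : Fin s₀) :
    Real.exp ((i : ℝ) * θ₁ + (j : ℝ) * θ₂) * A i j a b ≤ Ass A θ₁ θ₂ a b := by
  rw [Ass_apply]
  calc Real.exp ((i : ℝ) * θ₁ + (j : ℝ) * θ₂) * A i j a b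
      ≤ ∑ j' ∈ Finset.Icc (-1 : ℤ) 1, Real.exp ((i : ℝ) * θ₁ + (j' : ℝ) * θ₂) * A i j' a b :=
        Finset.single_le_sum (f := fun j' : ℤ => Real.exp ((i : ℝ) * θ₁ + (j' : ℝ) * θ₂) * A i j' a b)
          (fun j' _ => mul_nonneg (Real.exp_pos _).le (hA.nonneg _ _ _ _)) hj
    _ ≤ _ :=
        Finset.single_le_sum (f := fun i' : ℤ => ∑ j' ∈ Finset.Icc (-1 : ℤ) 1,
            Real.exp ((i' : ℝ) * θ₁ + (j' : ℝ) * θ₂) * A i' j' a b)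
          (fun i' _ => Finset.sum_nonneg fun j' _ =>
            mul_nonneg (Real.exp_pos _).le (hA.nonneg _ _ _ _)) hi

private lemma pow_entry_nonneg (hA : IsMMRW A) (θ₁ θ₂ : ℝ) :
    ∀ (n : ℕ) (a b : Fin s₀), 0 ≤ ((Ass A θ₁ θ₂) ^ n) a b := by
  intro n
  induction n with
  | zero =>
    intro a b
    rw [pow_zero, Matrix.one_apply]
    split <;> norm_num
  | succ n ih =>
    intro a b
    rw [pow_succ, Matrix.mul_apply]
    exact Finset.sum_nonneg fun c _ => mul_nonneg (ih a c) (Ass_nonneg hA θ₁ θ₂ c b)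

private lemma mul_le_pow_succ (hA : IsMMRW A) (θ₁ θ₂ : ℝ) (n : ℕ) (a c b : Fin s₀) :
    Ass A θ₁ θ₂ a c * ((Ass A θ₁ θ₂) ^ n) c b ≤ ((Ass A θ₁ θ₂) ^ (n + 1)) a b := by
  rw [pow_succ', Matrix.mul_apply]
  exact Finset.single_le_sum (f := fun c' => Ass A θ₁ θ₂ a c' * ((Ass A θ₁ θ₂) ^ n) c' b)
    (fun c' _ => mul_nonneg (Ass_nonneg hA θ₁ θ₂ a c') (pow_entry_nonneg hA θ₁ θ₂ n c' b))
    (Finset.mem_univ c)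

private lemma pow_mul_le_pow_add (hA : IsMMRW A) (θ₁ θ₂ : ℝ) (n m : ℕ) (a c b : Fin s₀) :
    ((Ass A θ₁ θ₂) ^ n) a c * ((Ass A θ₁ θ₂) ^ m) c b ≤ ((Ass A θ₁ θ₂) ^ (n + m)) a b := by
  rw [pow_add, Matrix.mul_apply]
  exact Finset.single_le_sum
    (f := fun c' => ((Ass A θ₁ θ₂) ^ n) a c' * ((Ass A θ₁ θ₂) ^ m) c' b)
    (fun c' _ => mul_nonneg (pow_entry_nonneg hA θ₁ θ₂ n a c')
      (pow_entry_nonneg hA θ₁ θ₂ m c' b))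
    (Finset.mem_univ c)

private lemma exists_pos_of_tsum_pos {α : Type*} {f : α → ℝ≥0∞} (h : 0 < ∑' i, f i) :
    ∃ i, 0 < f i := by
  by_contra hc
  push_neg at hc
  exact h.ne' (ENNReal.tsum_eq_zero.mpr fun i => le_antisymm (hc i) zero_le)

private lemma path_bound (hA : IsMMRW A) :
    ∀ (n : ℕ) (y y' : ℤ × ℤ × Fin s₀), 0 < kpow (ker A) n y y' →
      ∃ p : ℝ, 0 < p ∧ ∀ θ₁ θ₂ : ℝ,
        p * Real.exp (((y'.1 - y.1 : ℤ) : ℝ) * θ₁ + ((y'.2.1 - y.2.1 : ℤ) : ℝ) * θ₂)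
          ≤ ((Ass A θ₁ θ₂) ^ n) y.2.2 y'.2.2 := by
  intro n
  induction n with
  | zero =>
    intro y y' h
    simp only [kpow] at h
    split_ifs at h with hyy
    · subst hyy
      refine ⟨1, one_pos, fun θ₁ θ₂ => ?_⟩
      simp [pow_zero, Matrix.one_apply_eq]
    · exact absurd h (by simp)
  | succ n ih =>
    intro y y' h
    simp only [kpow, kmul] at h
    obtain ⟨z, hz⟩ := exists_pos_of_tsum_pos h
    obtain ⟨h1z, h2z⟩ := ENNReal.mul_pos_iff.mp hz
    have hApos : 0 < A (z.1 - y.1) (z.2.1 - y.2.1) y.2.2 z.2.2 := by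
      by_contra hc
      push_neg at hc
      rw [ker] at h1z
      simp [ENNReal.ofReal_eq_zero.mpr hc] at h1z
    have hmem : (z.1 - y.1) ∈ Finset.Icc (-1 : ℤ) 1 ∧
        (z.2.1 - y.2.1) ∈ Finset.Icc (-1 : ℤ) 1 := by
      by_contra hc
      rw [not_and_or] at hc
      have h0 := hA.skipfree _ _ hc
      rw [h0] at hApos
      simp at hApos
    obtain ⟨p', hp'0, hp'⟩ := ih z y' h2z
    refine ⟨A (z.1 - y.1) (z.2.1 - y.2.1) y.2.2 z.2.2 * p', mul_pos hApos hp'0,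
      fun θ₁ θ₂ => ?_⟩
    have hexp : ((y'.1 - y.1 : ℤ) : ℝ) * θ₁ + ((y'.2.1 - y.2.1 : ℤ) : ℝ) * θ₂
        = (((z.1 - y.1 : ℤ) : ℝ) * θ₁ + ((z.2.1 - y.2.1 : ℤ) : ℝ) * θ₂)
          + (((y'.1 - z.1 : ℤ) : ℝ) * θ₁ + ((y'.2.1 - z.2.1 : ℤ) : ℝ) * θ₂) := by
      push_cast
      ring
    rw [hexp, Real.exp_add]
    calc A (z.1 - y.1) (z.2.1 - y.2.1) y.2.2 z.2.2 * p' *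
          (Real.exp (((z.1 - y.1 : ℤ) : ℝ) * θ₁ + ((z.2.1 - y.2.1 : ℤ) : ℝ) * θ₂) *
           Real.exp (((y'.1 - z.1 : ℤ) : ℝ) * θ₁ + ((y'.2.1 - z.2.1 : ℤ) : ℝ) * θ₂))
        = (Real.exp (((z.1 - y.1 : ℤ) : ℝ) * θ₁ + ((z.2.1 - y.2.1 : ℤ) : ℝ) * θ₂) *
            A (z.1 - y.1) (z.2.1 - y.2.1) y.2.2 z.2.2) *
          (p' * Real.exp (((y'.1 - z.1 : ℤ) : ℝ) * θ₁ + ((y'.2.1 - z.2.1 : ℤ) : ℝ) * θ₂)) := by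
          ring
      _ ≤ Ass A θ₁ θ₂ y.2.2 z.2.2 * ((Ass A θ₁ θ₂) ^ n) z.2.2 y'.2.2 := by
          apply mul_le_mul (le_Ass hA hmem.1 hmem.2 θ₁ θ₂ _ _) (hp' θ₁ θ₂)
            (by positivity) (Ass_nonneg hA _ _ _ _)
      _ ≤ _ := mul_le_pow_succ hA θ₁ θ₂ n _ _ _

private lemma exists_unif (hs : 0 < s₀) (hA : IsMMRW A) (h1 : Assumption1 A) :
    ∃ m : ℕ, 1 ≤ m ∧ ∃ δ : ℝ, 0 < δ ∧
      ∀ (θ₁ θ₂ : ℝ) (a b : Fin s₀), δ ≤ ((Ass A θ₁ θ₂) ^ m) a b := by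
  have hN : ∀ a b : Fin s₀, ∃ N, ∀ n ≥ N,
      0 < kpow (ker A) n ((0 : ℤ), (0 : ℤ), a) ((0 : ℤ), (0 : ℤ), b) := fun a b => h1 _ _
  choose N hN using hN
  set m := (Finset.univ.sup fun p : Fin s₀ × Fin s₀ => N p.1 p.2) + 1 with hm
  have hkey : ∀ a b : Fin s₀, ∃ p : ℝ, 0 < p ∧ ∀ θ₁ θ₂ : ℝ, p ≤ ((Ass A θ₁ θ₂) ^ m) a b := by
    intro a b
    have hle : N a b ≤ m :=
      le_trans (Finset.le_sup (f := fun p : Fin s₀ × Fin s₀ => N p.1 p.2)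
        (Finset.mem_univ (a, b))) (Nat.le_succ _)
    have hpos := hN a b m hle
    obtain ⟨p, hp0, hp⟩ := path_bound hA m ((0 : ℤ), (0 : ℤ), a) ((0 : ℤ), (0 : ℤ), b) hpos
    refine ⟨p, hp0, fun θ₁ θ₂ => ?_⟩
    have h := hp θ₁ θ₂
    simpa using h
  choose p hp0 hp using hkey
  have hnn : Nonempty (Fin s₀) := ⟨⟨0, hs⟩⟩
  have hne : (Finset.univ : Finset (Fin s₀ × Fin s₀)).Nonempty := Finset.univ_nonempty
  refine ⟨m, Nat.le_add_left 1 _, Finset.univ.inf' hne (fun q => p q.1 q.2), ?_, ?_⟩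
  · rw [Finset.lt_inf'_iff]
    exact fun q _ => hp0 q.1 q.2
  · intro θ₁ θ₂ a b
    exact le_trans (Finset.inf'_le _ (Finset.mem_univ (a, b))) (hp a b θ₁ θ₂)

end ProofAux
section SpectralAux

open Matrix Polynomial

variable {A : ℤ → ℤ → Matrix (Fin s₀) (Fin s₀) ℝ}

private lemma charpoly_eval' (M : Matrix (Fin s₀) (Fin s₀) ℂ) (z : ℂ) :
    M.charpoly.eval z = (Matrix.scalar (Fin s₀) z - M).det := by
  rw [Matrix.charpoly, eval_det, matPolyEquiv_charmatrix, eval_sub, eval_X, eval_C]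

private lemma scalar_mulVec (z : ℂ) (v : Fin s₀ → ℂ) :
    (Matrix.scalar (Fin s₀) z).mulVec v = z • v := by
  ext i
  rw [Matrix.scalar_apply, Matrix.mulVec_diagonal]
  rfl

private lemma algebraMap_eq_scalar (z : ℂ) :
    algebraMap ℂ (Matrix (Fin s₀) (Fin s₀) ℂ) z = Matrix.scalar (Fin s₀) z := by
  rw [Matrix.scalar_apply, Matrix.algebraMap_eq_diagonal]
  rfl

private lemma mem_spectrum_iff_root {M : Matrix (Fin s₀) (Fin s₀) ℂ} {z : ℂ} :
    z ∈ spectrum ℂ M ↔ M.charpoly.IsRoot z := by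
  rw [spectrum.mem_iff, algebraMap_eq_scalar, Matrix.isUnit_iff_isUnit_det,
    isUnit_iff_ne_zero, not_ne_iff, Polynomial.IsRoot, charpoly_eval']

private lemma mem_spectrum_iff_eigen {M : Matrix (Fin s₀) (Fin s₀) ℂ} {z : ℂ} :
    z ∈ spectrum ℂ M ↔ ∃ v : Fin s₀ → ℂ, v ≠ 0 ∧ M.mulVec v = z • v := by
  rw [mem_spectrum_iff_root, Polynomial.IsRoot, charpoly_eval',
    ← Matrix.exists_mulVec_eq_zero_iff]
  constructor
  · rintro ⟨v, hv0, hv⟩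
    refine ⟨v, hv0, ?_⟩
    rw [Matrix.sub_mulVec, scalar_mulVec, sub_eq_zero] at hv
    exact hv.symm
  · rintro ⟨v, hv0, hv⟩
    exact ⟨v, hv0, by rw [Matrix.sub_mulVec, scalar_mulVec, hv, sub_self]⟩

private lemma spectrum_finite' (M : Matrix (Fin s₀) (Fin s₀) ℂ) :
    (spectrum ℂ M).Finite := by
  refine Set.Finite.subset (Polynomial.finite_setOf_isRoot M.charpoly_monic.ne_zero) ?_
  exact fun z hz => mem_spectrum_iff_root.mp hz

private lemma spectrum_nonempty' (hs : 0 < s₀) (M : Matrix (Fin s₀) (Fin s₀) ℂ) :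
    (spectrum ℂ M).Nonempty := by
  have hdeg : M.charpoly.natDegree = s₀ := by
    simpa using M.charpoly_natDegree_eq_dim
  obtain ⟨z, hz⟩ := IsAlgClosed.exists_root M.charpoly
    (by
      rw [Polynomial.degree_eq_natDegree M.charpoly_monic.ne_zero, hdeg]
      exact_mod_cast hs.ne')
  exact ⟨z, mem_spectrum_iff_root.mpr hz⟩

private lemma abs_le_sprC {M : Matrix (Fin s₀) (Fin s₀) ℂ} {z : ℂ}
    (hz : z ∈ spectrum ℂ M) : ‖z‖ ≤ sprC M :=
  le_csSup (((spectrum_finite' M).image _).bddAbove) ⟨z, hz, rfl⟩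

private lemma exists_sprC_eq (hs : 0 < s₀) (M : Matrix (Fin s₀) (Fin s₀) ℂ) :
    ∃ z ∈ spectrum ℂ M, sprC M = ‖z‖ := by
  have hmem : sprC M ∈ (fun z => ‖z‖) '' spectrum ℂ M :=
    Set.Nonempty.csSup_mem ((spectrum_nonempty' hs M).image _) ((spectrum_finite' M).image _)
  obtain ⟨z, hz, hz'⟩ := hmem
  exact ⟨z, hz, hz'.symm⟩

private lemma sprC_nonneg (hs : 0 < s₀) (M : Matrix (Fin s₀) (Fin s₀) ℂ) : 0 ≤ sprC M := by
  obtain ⟨z, _, hz⟩ := exists_sprC_eq hs M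
  rw [hz]
  exact norm_nonneg _

private lemma chi_nonneg (hs : 0 < s₀) (A : ℤ → ℤ → Matrix (Fin s₀) (Fin s₀) ℝ) (θ₁ θ₂ : ℝ) :
    0 ≤ chi A θ₁ θ₂ :=
  sprC_nonneg hs _

private lemma spec_abs_le {B : Matrix (Fin s₀) (Fin s₀) ℝ} (hB : ∀ a b, 0 ≤ B a b) {z : ℂ}
    (hz : z ∈ spectrum ℂ (B.map Complex.ofReal)) :
    ‖z‖ ≤ ∑ a, ∑ b, B a b := by
  obtain ⟨v, hv0, hv⟩ := mem_spectrum_iff_eigen.mp hz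
  obtain ⟨i₀, hi₀⟩ := Function.ne_iff.mp hv0
  have hne : (Finset.univ : Finset (Fin s₀)).Nonempty := ⟨i₀, Finset.mem_univ i₀⟩
  obtain ⟨i, -, hi⟩ := Finset.exists_max_image Finset.univ (fun j => ‖v j‖) hne
  have hvi : 0 < ‖v i‖ :=
    lt_of_lt_of_le (by simpa using hi₀) (hi i₀ (Finset.mem_univ i₀))
  have key : ‖z‖ * ‖v i‖ ≤ (∑ a, ∑ b, B a b) * ‖v i‖ := by
    calc ‖z‖ * ‖v i‖ = ‖z * v i‖ := (norm_mul _ _).symm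
      _ = ‖(B.map Complex.ofReal).mulVec v i‖ := by
          rw [hv]; rfl
      _ = ‖∑ j, (B.map Complex.ofReal) i j * v j‖ := by
          simp [Matrix.mulVec, dotProduct]
      _ ≤ ∑ j, ‖(B.map Complex.ofReal) i j * v j‖ :=
          norm_sum_le _ _
      _ = ∑ j, B i j * ‖v j‖ := by
          refine Finset.sum_congr rfl fun j _ => ?_
          rw [norm_mul, Matrix.map_apply, Complex.norm_real, Real.norm_eq_abs, abs_of_nonneg (hB i j)]
      _ ≤ ∑ j, B i j * ‖v i‖ :=
          Finset.sum_le_sum fun j _ =>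
            mul_le_mul_of_nonneg_left (hi j (Finset.mem_univ j)) (hB i j)
      _ = (∑ j, B i j) * ‖v i‖ := by rw [Finset.sum_mul]
      _ ≤ (∑ a, ∑ b, B a b) * ‖v i‖ := by
          refine mul_le_mul_of_nonneg_right ?_ hvi.le
          exact Finset.single_le_sum (f := fun a => ∑ b, B a b)
            (fun a _ => Finset.sum_nonneg fun b _ => hB a b) (Finset.mem_univ i)
  exact le_of_mul_le_mul_right key hvi

private lemma map_pow_ofReal (B : Matrix (Fin s₀) (Fin s₀) ℝ) (n : ℕ) :
    (B ^ n).map Complex.ofReal = (B.map Complex.ofReal) ^ n := by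
  induction n with
  | zero =>
    rw [pow_zero, pow_zero]
    exact Matrix.map_one _ Complex.ofReal_zero Complex.ofReal_one
  | succ n ih =>
    have hcoe : ⇑Complex.ofRealHom = Complex.ofReal := rfl
    rw [pow_succ, pow_succ, ← ih, ← hcoe, Matrix.map_mul]

private lemma chi_pow_le_N (hs : 0 < s₀) (hA : IsMMRW A) (θ₁ θ₂ : ℝ) (n : ℕ) :
    chi A θ₁ θ₂ ^ n ≤ ∑ a, ∑ b, ((Ass A θ₁ θ₂) ^ n) a b := by
  obtain ⟨z, hz, hchi⟩ := exists_sprC_eq hs ((Ass A θ₁ θ₂).map Complex.ofReal)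
  have hzn : z ^ n ∈ spectrum ℂ (((Ass A θ₁ θ₂) ^ n).map Complex.ofReal) := by
    rw [map_pow_ofReal]
    exact spectrum.pow_image_subset _ n ⟨z, hz, rfl⟩
  have := spec_abs_le (fun a b => pow_entry_nonneg hA θ₁ θ₂ n a b) hzn
  calc chi A θ₁ θ₂ ^ n = ‖z ^ n‖ := by rw [chi, hchi, norm_pow]
    _ ≤ _ := this

private lemma diag_le_chi (hs : 0 < s₀) (hA : IsMMRW A) (θ₁ θ₂ : ℝ) (n : ℕ) (a : Fin s₀) :
    ((Ass A θ₁ θ₂) ^ n) a a ≤ (s₀ : ℝ) * chi A θ₁ θ₂ ^ n := by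
  rcases Nat.eq_zero_or_pos n with rfl | hn
  · rw [pow_zero, pow_zero, Matrix.one_apply_eq, mul_one]
    exact_mod_cast hs
  set Bc := ((Ass A θ₁ θ₂) ^ n).map Complex.ofReal with hBc
  have hroots : ∀ μ ∈ Bc.charpoly.roots, ‖μ‖ ≤ chi A θ₁ θ₂ ^ n := by
    intro μ hμ
    have hspec : μ ∈ spectrum ℂ Bc :=
      mem_spectrum_iff_root.mpr (Polynomial.isRoot_of_mem_roots hμ)
    rw [hBc, map_pow_ofReal, spectrum.map_pow_of_pos _ hn] at hspec
    obtain ⟨w, hw, rfl⟩ := hspec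
    rw [norm_pow]
    exact pow_le_pow_left₀ (norm_nonneg _) (abs_le_sprC hw) n
  have htr : Bc.trace = ((Matrix.trace ((Ass A θ₁ θ₂) ^ n) : ℝ) : ℂ) := by
    simp [Matrix.trace, Matrix.diag, hBc, Matrix.map_apply]
  have habs : ‖Bc.trace‖ ≤ (s₀ : ℝ) * chi A θ₁ θ₂ ^ n := by
    rw [Bc.trace_eq_sum_roots_charpoly]
    calc ‖Bc.charpoly.roots.sum‖
        ≤ (Bc.charpoly.roots.map (fun z => ‖z‖)).sum := by
          simpa using norm_multiset_sum_le Bc.charpoly.roots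
      _ ≤ Multiset.card (Bc.charpoly.roots.map (fun z => ‖z‖)) • (chi A θ₁ θ₂ ^ n) := by
          refine Multiset.sum_le_card_nsmul _ _ ?_
          intro x hx
          obtain ⟨μ, hμ, rfl⟩ := Multiset.mem_map.mp hx
          exact hroots μ hμ
      _ ≤ (s₀ : ℝ) * chi A θ₁ θ₂ ^ n := by
          rw [Multiset.card_map, nsmul_eq_mul]
          refine mul_le_mul_of_nonneg_right ?_
            (pow_nonneg (chi_nonneg hs A θ₁ θ₂) n)
          have hcard : Multiset.card Bc.charpoly.roots ≤ s₀ := by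
            refine le_trans (Polynomial.card_roots' _) ?_
            simpa using Bc.charpoly_natDegree_eq_dim.le
          exact_mod_cast hcard
  have h1 : ((Ass A θ₁ θ₂) ^ n) a a ≤ Matrix.trace ((Ass A θ₁ θ₂) ^ n) := by
    rw [Matrix.trace]
    exact Finset.single_le_sum (f := fun c => ((Ass A θ₁ θ₂) ^ n) c c)
      (fun c _ => pow_entry_nonneg hA θ₁ θ₂ n c c) (Finset.mem_univ a)
  have h2 : Matrix.trace ((Ass A θ₁ θ₂) ^ n) ≤ (s₀ : ℝ) * chi A θ₁ θ₂ ^ n := by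
    refine le_trans (le_abs_self _) ?_
    have : |Matrix.trace ((Ass A θ₁ θ₂) ^ n)| = ‖Bc.trace‖ := by
      rw [htr, Complex.norm_real, Real.norm_eq_abs]
    rw [this]
    exact habs
  exact h1.trans h2

end SpectralAux
section LCAux

open Matrix

variable {A : ℤ → ℤ → Matrix (Fin s₀) (Fin s₀) ℝ}

private def LCfun (f : ℝ × ℝ → ℝ) : Prop :=
  (∀ θ, 0 ≤ f θ) ∧ ∀ x y : ℝ × ℝ, ∀ lam mu : ℝ, 0 ≤ lam → 0 ≤ mu → lam + mu = 1 →
    f (lam • x + mu • y) ≤ f x ^ lam * f y ^ mu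

private lemma holder2 {a₁ b₁ a₂ b₂ lam mu : ℝ} (ha₁ : 0 ≤ a₁) (hb₁ : 0 ≤ b₁) (ha₂ : 0 ≤ a₂)
    (hb₂ : 0 ≤ b₂) (hlam : 0 ≤ lam) (hmu : 0 ≤ mu) (hsum : lam + mu = 1) :
    a₁ ^ lam * b₁ ^ mu + a₂ ^ lam * b₂ ^ mu ≤ (a₁ + a₂) ^ lam * (b₁ + b₂) ^ mu := by
  rcases eq_or_lt_of_le hlam with h0 | hlam'
  · have hmu1 : mu = 1 := by linarith
    simp [← h0, hmu1]
  rcases eq_or_lt_of_le hmu with h0 | hmu'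
  · have hlam1 : lam = 1 := by linarith
    simp [← h0, hlam1]
  by_cases hS : a₁ + a₂ = 0
  · have h1 : a₁ = 0 := by linarith
    have h2 : a₂ = 0 := by linarith
    simp [h1, h2, Real.zero_rpow (ne_of_gt hlam'), hS]
  by_cases hT : b₁ + b₂ = 0
  · have h1 : b₁ = 0 := by linarith
    have h2 : b₂ = 0 := by linarith
    simp [h1, h2, Real.zero_rpow (ne_of_gt hmu'), hT]
  have hSpos : 0 < a₁ + a₂ := lt_of_le_of_ne (by positivity) (Ne.symm hS)
  have hTpos : 0 < b₁ + b₂ := lt_of_le_of_ne (by positivity) (Ne.symm hT)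
  have key : ∀ a b : ℝ, 0 ≤ a → 0 ≤ b →
      a ^ lam * b ^ mu ≤ (a₁ + a₂) ^ lam * (b₁ + b₂) ^ mu *
        (lam * (a / (a₁ + a₂)) + mu * (b / (b₁ + b₂))) := by
    intro a b ha hb
    have hgm := Real.geom_mean_le_arith_mean2_weighted hlam hmu
      (div_nonneg ha hSpos.le) (div_nonneg hb hTpos.le) hsum
    have hrw : a ^ lam * b ^ mu = (a₁ + a₂) ^ lam * (b₁ + b₂) ^ mu *
        ((a / (a₁ + a₂)) ^ lam * (b / (b₁ + b₂)) ^ mu) := by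
      rw [Real.div_rpow ha hSpos.le, Real.div_rpow hb hTpos.le]
      have hS' : (a₁ + a₂) ^ lam ≠ 0 := by positivity
      have hT' : (b₁ + b₂) ^ mu ≠ 0 := by positivity
      field_simp
    rw [hrw]
    exact mul_le_mul_of_nonneg_left hgm (by positivity)
  calc a₁ ^ lam * b₁ ^ mu + a₂ ^ lam * b₂ ^ mu
      ≤ (a₁ + a₂) ^ lam * (b₁ + b₂) ^ mu *
          (lam * (a₁ / (a₁ + a₂)) + mu * (b₁ / (b₁ + b₂))) +
        (a₁ + a₂) ^ lam * (b₁ + b₂) ^ mu *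
          (lam * (a₂ / (a₁ + a₂)) + mu * (b₂ / (b₁ + b₂))) :=
        add_le_add (key a₁ b₁ ha₁ hb₁) (key a₂ b₂ ha₂ hb₂)
    _ = (a₁ + a₂) ^ lam * (b₁ + b₂) ^ mu *
          (lam * ((a₁ + a₂) / (a₁ + a₂)) + mu * ((b₁ + b₂) / (b₁ + b₂))) := by ring
    _ = (a₁ + a₂) ^ lam * (b₁ + b₂) ^ mu := by
        rw [div_self hS, div_self hT, mul_one, mul_one, hsum, mul_one]

private lemma LCfun_const {c : ℝ} (hc : 0 ≤ c) : LCfun (fun _ => c) := by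
  refine ⟨fun _ => hc, fun x y lam mu hlam hmu hsum => ?_⟩
  rw [← Real.rpow_add' hc (by rw [hsum]; exact one_ne_zero), hsum, Real.rpow_one]

private lemma LCfun_atom (l₁ l₂ c : ℝ) (hc : 0 ≤ c) :
    LCfun (fun θ : ℝ × ℝ => Real.exp (l₁ * θ.1 + l₂ * θ.2) * c) := by
  refine ⟨fun θ => mul_nonneg (Real.exp_pos _).le hc, fun x y lam mu hlam hmu hsum => ?_⟩
  have hexp : l₁ * (lam • x + mu • y).1 + l₂ * (lam • x + mu • y).2
      = (l₁ * x.1 + l₂ * x.2) * lam + (l₁ * y.1 + l₂ * y.2) * mu := by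
    have h1 : (lam • x + mu • y).1 = lam * x.1 + mu * y.1 := rfl
    have h2 : (lam • x + mu • y).2 = lam * x.2 + mu * y.2 := rfl
    rw [h1, h2]
    ring
  have he : ∀ t s : ℝ, Real.exp (t * s) = Real.exp t ^ s := fun t s => by
    rw [Real.rpow_def_of_pos (Real.exp_pos t), Real.log_exp]
  have hc' : c = c ^ lam * c ^ mu := by
    rw [← Real.rpow_add' hc (by rw [hsum]; exact one_ne_zero), hsum, Real.rpow_one]
  show Real.exp (l₁ * (lam • x + mu • y).1 + l₂ * (lam • x + mu • y).2) * c
      ≤ (Real.exp (l₁ * x.1 + l₂ * x.2) * c) ^ lam * (Real.exp (l₁ * y.1 + l₂ * y.2) * c) ^ mu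
  rw [hexp, Real.exp_add, he, he,
    Real.mul_rpow (Real.exp_pos _).le hc, Real.mul_rpow (Real.exp_pos _).le hc]
  refine le_of_eq ?_
  conv_lhs => rw [hc']
  ring

private lemma LCfun.add {f g : ℝ × ℝ → ℝ} (hf : LCfun f) (hg : LCfun g) :
    LCfun (fun θ => f θ + g θ) :=
  ⟨fun θ => add_nonneg (hf.1 θ) (hg.1 θ), fun x y lam mu hlam hmu hsum =>
    le_trans (add_le_add (hf.2 x y lam mu hlam hmu hsum) (hg.2 x y lam mu hlam hmu hsum))
      (holder2 (hf.1 x) (hf.1 y) (hg.1 x) (hg.1 y) hlam hmu hsum)⟩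

private lemma LCfun.mul {f g : ℝ × ℝ → ℝ} (hf : LCfun f) (hg : LCfun g) :
    LCfun (fun θ => f θ * g θ) := by
  refine ⟨fun θ => mul_nonneg (hf.1 θ) (hg.1 θ), fun x y lam mu hlam hmu hsum => ?_⟩
  calc f (lam • x + mu • y) * g (lam • x + mu • y)
      ≤ (f x ^ lam * f y ^ mu) * (g x ^ lam * g y ^ mu) :=
        mul_le_mul (hf.2 x y lam mu hlam hmu hsum) (hg.2 x y lam mu hlam hmu hsum)
          (hg.1 _) (mul_nonneg (Real.rpow_nonneg (hf.1 x) _) (Real.rpow_nonneg (hf.1 y) _))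
    _ = (f x * g x) ^ lam * (f y * g y) ^ mu := by
        rw [Real.mul_rpow (hf.1 x) (hg.1 x), Real.mul_rpow (hf.1 y) (hg.1 y)]
        ring

private lemma LCfun_sum {ι : Type*} (s : Finset ι) (f : ι → ℝ × ℝ → ℝ)
    (h : ∀ i ∈ s, LCfun (f i)) : LCfun (fun θ => ∑ i ∈ s, f i θ) := by
  induction s using Finset.cons_induction with
  | empty => simpa using LCfun_const le_rfl
  | cons a s ha ih =>
    simp only [Finset.sum_cons]
    exact LCfun.add (h a (Finset.mem_cons_self a s))
      (ih fun i hi => h i (Finset.mem_cons_of_mem hi))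

private lemma LCfun_Ass (hA : IsMMRW A) (a b : Fin s₀) :
    LCfun (fun θ : ℝ × ℝ => Ass A θ.1 θ.2 a b) := by
  have hfun : (fun θ : ℝ × ℝ => Ass A θ.1 θ.2 a b)
      = fun θ : ℝ × ℝ => ∑ i ∈ Finset.Icc (-1 : ℤ) 1, ∑ j ∈ Finset.Icc (-1 : ℤ) 1,
          Real.exp ((i : ℝ) * θ.1 + (j : ℝ) * θ.2) * A i j a b := by
    funext θ
    exact Ass_apply A θ.1 θ.2 a b
  rw [hfun]
  exact LCfun_sum _ _ fun i _ => LCfun_sum _ _ fun j _ =>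
    LCfun_atom (i : ℝ) (j : ℝ) _ (hA.nonneg i j a b)

private lemma LCfun_pow (hA : IsMMRW A) (n : ℕ) :
    ∀ a b : Fin s₀, LCfun (fun θ : ℝ × ℝ => ((Ass A θ.1 θ.2) ^ n) a b) := by
  induction n with
  | zero =>
    intro a b
    have hfun : (fun θ : ℝ × ℝ => ((Ass A θ.1 θ.2) ^ 0) a b)
        = fun _ : ℝ × ℝ => (1 : Matrix (Fin s₀) (Fin s₀) ℝ) a b := by
      funext θ
      rw [pow_zero]
    rw [hfun]
    refine LCfun_const ?_
    rw [Matrix.one_apply]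
    split <;> norm_num
  | succ n ih =>
    intro a b
    have hfun : (fun θ : ℝ × ℝ => ((Ass A θ.1 θ.2) ^ (n + 1)) a b)
        = fun θ : ℝ × ℝ => ∑ c, Ass A θ.1 θ.2 a c * ((Ass A θ.1 θ.2) ^ n) c b := by
      funext θ
      rw [pow_succ', Matrix.mul_apply]
    rw [hfun]
    exact LCfun_sum _ _ fun c _ => LCfun.mul (LCfun_Ass hA a c) (ih c b)

private lemma LCfun_N (hA : IsMMRW A) (n : ℕ) :
    LCfun (fun θ : ℝ × ℝ => ∑ a, ∑ b, ((Ass A θ.1 θ.2) ^ n) a b) :=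
  LCfun_sum _ _ fun a _ => LCfun_sum _ _ fun b _ => LCfun_pow hA n a b

private lemma cont_pow (A : ℤ → ℤ → Matrix (Fin s₀) (Fin s₀) ℝ) (n : ℕ) :
    ∀ a b : Fin s₀, Continuous (fun θ : ℝ × ℝ => ((Ass A θ.1 θ.2) ^ n) a b) := by
  induction n with
  | zero =>
    intro a b
    simp only [pow_zero]
    exact continuous_const
  | succ n ih =>
    intro a b
    have hfun : (fun θ : ℝ × ℝ => ((Ass A θ.1 θ.2) ^ (n + 1)) a b)
        = fun θ : ℝ × ℝ => ∑ c, Ass A θ.1 θ.2 a c * ((Ass A θ.1 θ.2) ^ n) c b := by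
      funext θ
      rw [pow_succ', Matrix.mul_apply]
    rw [hfun]
    refine continuous_finset_sum _ fun c _ => Continuous.mul ?_ (ih c b)
    have hfun2 : (fun θ : ℝ × ℝ => Ass A θ.1 θ.2 a c)
        = fun θ : ℝ × ℝ => ∑ i ∈ Finset.Icc (-1 : ℤ) 1, ∑ j ∈ Finset.Icc (-1 : ℤ) 1,
            Real.exp ((i : ℝ) * θ.1 + (j : ℝ) * θ.2) * A i j a c := by
      funext θ
      exact Ass_apply A θ.1 θ.2 a c
    rw [hfun2]
    refine continuous_finset_sum _ fun i _ => continuous_finset_sum _ fun j _ => ?_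
    exact ((Real.continuous_exp.comp
      ((continuous_const.mul continuous_fst).add (continuous_const.mul continuous_snd))).mul
      continuous_const)

end LCAux
/-- Proposition 2.3: under Assumption 1, the closed convex set
`Γ̄ = {(θ₁,θ₂) ∈ ℝ² : χ(θ₁,θ₂) ≤ 1}` is bounded. -/
theorem gammaBar_bounded {s₀ : ℕ} (hs : 0 < s₀)
    (A : ℤ → ℤ → Matrix (Fin s₀) (Fin s₀) ℝ) (hA : IsMMRW A) (h1 : Assumption1 A) :
    IsClosed (GammaBar A) ∧ Convex ℝ (GammaBar A) ∧ Bornology.IsBounded (GammaBar A) := by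
  obtain ⟨m, hm1, δ, hδ, hunif⟩ := exists_unif hs hA h1
  set K : ℝ := (s₀ : ℝ) ^ 3 / δ with hK
  have hs0 : (0 : ℝ) < (s₀ : ℝ) := by exact_mod_cast hs
  have hK0 : 0 < K := by positivity
  have hdown : ∀ (θ : ℝ × ℝ) (n : ℕ),
      ∑ a, ∑ b, ((Ass A θ.1 θ.2) ^ n) a b ≤ K * chi A θ.1 θ.2 ^ (n + m) := by
    intro θ n
    have hab : ∀ a b : Fin s₀, ((Ass A θ.1 θ.2) ^ n) a b
        ≤ (s₀ : ℝ) * chi A θ.1 θ.2 ^ (n + m) / δ := by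
      intro a b
      have h1' : ((Ass A θ.1 θ.2) ^ n) a b * δ ≤ ((Ass A θ.1 θ.2) ^ (n + m)) a a :=
        le_trans (mul_le_mul_of_nonneg_left (hunif θ.1 θ.2 b a)
          (pow_entry_nonneg hA θ.1 θ.2 n a b))
          (pow_mul_le_pow_add hA θ.1 θ.2 n m a b a)
      have h2' := diag_le_chi hs hA θ.1 θ.2 (n + m) a
      rw [le_div_iff₀ hδ]
      exact h1'.trans h2'
    calc ∑ a, ∑ b, ((Ass A θ.1 θ.2) ^ n) a b
        ≤ ∑ _a : Fin s₀, ∑ _b : Fin s₀, (s₀ : ℝ) * chi A θ.1 θ.2 ^ (n + m) / δ :=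
          Finset.sum_le_sum fun a _ => Finset.sum_le_sum fun b _ => hab a b
      _ = (s₀ : ℝ) * ((s₀ : ℝ) * ((s₀ : ℝ) * chi A θ.1 θ.2 ^ (n + m) / δ)) := by
          simp [Finset.sum_const, Fintype.card_fin, nsmul_eq_mul, mul_assoc]
      _ = K * chi A θ.1 θ.2 ^ (n + m) := by
          rw [hK]
          field_simp
  have hNleK : ∀ θ : ℝ × ℝ, chi A θ.1 θ.2 ≤ 1 → ∀ n : ℕ,
      ∑ a, ∑ b, ((Ass A θ.1 θ.2) ^ n) a b ≤ K := by
    intro θ hθ n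
    refine le_trans (hdown θ n) ?_
    have hpow : chi A θ.1 θ.2 ^ (n + m) ≤ 1 :=
      pow_le_one₀ (chi_nonneg hs A θ.1 θ.2) hθ
    calc K * chi A θ.1 θ.2 ^ (n + m) ≤ K * 1 :=
          mul_le_mul_of_nonneg_left hpow hK0.le
      _ = K := mul_one K
  have hchar : ∀ θ : ℝ × ℝ, (∀ n : ℕ, chi A θ.1 θ.2 ^ (n + 1) ≤ K) → chi A θ.1 θ.2 ≤ 1 := by
    intro θ hθ
    by_contra hgt
    push_neg at hgt
    obtain ⟨n, hn⟩ := pow_unbounded_of_one_lt K hgt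
    exact absurd (hθ n) (not_le.mpr (lt_of_lt_of_le hn
      (pow_le_pow_right₀ hgt.le (Nat.le_succ n))))
  have hclosed : IsClosed (GammaBar A) := by
    have hset : GammaBar A = ⋂ n : ℕ,
        {θ : ℝ × ℝ | ∑ a, ∑ b, ((Ass A θ.1 θ.2) ^ (n + 1)) a b ≤ K} := by
      ext θ
      simp only [GammaBar, Set.mem_setOf_eq, Set.mem_iInter]
      constructor
      · intro h n
        exact hNleK θ h (n + 1)
      · intro h
        exact hchar θ fun n => le_trans (chi_pow_le_N hs hA θ.1 θ.2 (n + 1)) (h n)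
    rw [hset]
    refine isClosed_iInter fun n => isClosed_le ?_ continuous_const
    exact continuous_finset_sum _ fun a _ => continuous_finset_sum _ fun b _ =>
      cont_pow A (n + 1) a b
  have hconv : Convex ℝ (GammaBar A) := by
    intro x hx y hy lam mu hlam hmu hsum
    have hx' : chi A x.1 x.2 ≤ 1 := hx
    have hy' : chi A y.1 y.2 ≤ 1 := hy
    have hmid : chi A (lam • x + mu • y).1 (lam • x + mu • y).2 ≤ 1 := by
      refine hchar _ fun n => ?_
      have hN := (LCfun_N hA (n + 1)).2 x y lam mu hlam hmu hsum
      have hNx : ∑ a, ∑ b, ((Ass A x.1 x.2) ^ (n + 1)) a b ≤ K := hNleK x hx' (n + 1)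
      have hNy : ∑ a, ∑ b, ((Ass A y.1 y.2) ^ (n + 1)) a b ≤ K := hNleK y hy' (n + 1)
      have hNx0 : 0 ≤ ∑ a, ∑ b, ((Ass A x.1 x.2) ^ (n + 1)) a b := (LCfun_N hA (n + 1)).1 x
      have hNy0 : 0 ≤ ∑ a, ∑ b, ((Ass A y.1 y.2) ^ (n + 1)) a b := (LCfun_N hA (n + 1)).1 y
      calc chi A (lam • x + mu • y).1 (lam • x + mu • y).2 ^ (n + 1)
          ≤ ∑ a, ∑ b, ((Ass A (lam • x + mu • y).1 (lam • x + mu • y).2) ^ (n + 1)) a b :=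
            chi_pow_le_N hs hA _ _ (n + 1)
        _ ≤ (∑ a, ∑ b, ((Ass A x.1 x.2) ^ (n + 1)) a b) ^ lam *
            (∑ a, ∑ b, ((Ass A y.1 y.2) ^ (n + 1)) a b) ^ mu := hN
        _ ≤ K ^ lam * K ^ mu :=
            mul_le_mul (Real.rpow_le_rpow hNx0 hNx hlam) (Real.rpow_le_rpow hNy0 hNy hmu)
              (Real.rpow_nonneg hNy0 mu) (Real.rpow_nonneg hK0.le lam)
        _ = K := by rw [← Real.rpow_add hK0, hsum, Real.rpow_one]
    exact hmid
  have hdir : ∀ d₁ d₂ : ℤ, ∃ C : ℝ, ∀ θ : ℝ × ℝ, θ ∈ GammaBar A →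
      (d₁ : ℝ) * θ.1 + (d₂ : ℝ) * θ.2 ≤ C := by
    intro d₁ d₂
    obtain ⟨N, hN⟩ := h1 ((0 : ℤ), (0 : ℤ), (⟨0, hs⟩ : Fin s₀)) (d₁, d₂, (⟨0, hs⟩ : Fin s₀))
    obtain ⟨p, hp0, hp⟩ := path_bound hA N _ _ (hN N le_rfl)
    refine ⟨Real.log ((s₀ : ℝ) / p), fun θ hθ => ?_⟩
    have hθ' : chi A θ.1 θ.2 ≤ 1 := hθ
    have h2 : ((Ass A θ.1 θ.2) ^ N) (⟨0, hs⟩ : Fin s₀) (⟨0, hs⟩ : Fin s₀) ≤ (s₀ : ℝ) := by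
      refine le_trans (diag_le_chi hs hA θ.1 θ.2 N ⟨0, hs⟩) ?_
      have hp1 : chi A θ.1 θ.2 ^ N ≤ 1 := pow_le_one₀ (chi_nonneg hs A θ.1 θ.2) hθ'
      calc (s₀ : ℝ) * chi A θ.1 θ.2 ^ N ≤ (s₀ : ℝ) * 1 :=
            mul_le_mul_of_nonneg_left hp1 hs0.le
        _ = (s₀ : ℝ) := mul_one _
    have h4 := hp θ.1 θ.2
    simp only [sub_zero] at h4
    have h3 : p * Real.exp ((d₁ : ℝ) * θ.1 + (d₂ : ℝ) * θ.2) ≤ (s₀ : ℝ) := h4.trans h2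
    have h5 : Real.exp ((d₁ : ℝ) * θ.1 + (d₂ : ℝ) * θ.2) ≤ (s₀ : ℝ) / p := by
      rw [le_div_iff₀ hp0]
      linarith
    calc (d₁ : ℝ) * θ.1 + (d₂ : ℝ) * θ.2
        = Real.log (Real.exp ((d₁ : ℝ) * θ.1 + (d₂ : ℝ) * θ.2)) := (Real.log_exp _).symm
      _ ≤ Real.log ((s₀ : ℝ) / p) := Real.log_le_log (Real.exp_pos _) h5
  obtain ⟨C1, hC1⟩ := hdir 1 0
  obtain ⟨C2, hC2⟩ := hdir (-1) 0
  obtain ⟨C3, hC3⟩ := hdir 0 1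
  obtain ⟨C4, hC4⟩ := hdir 0 (-1)
  have hbdd : Bornology.IsBounded (GammaBar A) := by
    rw [isBounded_iff_forall_norm_le]
    refine ⟨max (max C1 C2) (max C3 C4), fun θ hθ => ?_⟩
    have hb1 := hC1 θ hθ
    have hb2 := hC2 θ hθ
    have hb3 := hC3 θ hθ
    have hb4 := hC4 θ hθ
    simp only [Int.cast_one, Int.cast_zero, Int.cast_neg, one_mul, zero_mul, neg_mul,
      add_zero, zero_add, neg_one_mul] at hb1 hb2 hb3 hb4
    have h1' : |θ.1| ≤ max C1 C2 := abs_le.mpr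
      ⟨by have := le_max_right C1 C2; linarith, le_trans hb1 (le_max_left C1 C2)⟩
    have h2' : |θ.2| ≤ max C3 C4 := abs_le.mpr
      ⟨by have := le_max_right C3 C4; linarith, le_trans hb3 (le_max_left C3 C4)⟩
    rw [Prod.norm_def]
    simp only [Real.norm_eq_abs]
    exact max_le_max h1' h2'
  exact ⟨hclosed, hconv, hbdd⟩
end MMRW2d
end

section
/- Under Assumptions 1, 2 and 3, for any c=(c₁,c₂)∈ℤ₊² with c≠(0,0) and for every (x,j)∈𝕊₊, j'∈S₀ and l₁,l₂∈ℤ₊, limsup_{k→∞} (1/k) log q̃_{(x,j),(kc₁+l₁, kc₂+l₂, j')} ≤ − sup_{θ∈𝒟_x} ⟨θ,c⟩, where ⟨·,·⟩ is the Euclidean inner product. -/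
open scoped ENNReal

namespace MMRW2d

variable {s₀ : ℕ}

lemma kpow_add {α : Type*} [DecidableEq α] (p : α → α → ℝ≥0∞) (m n : ℕ) (i j : α) :
    kpow p (m + n) i j = ∑' k, kpow p m i k * kpow p n k j := by
  induction m generalizing i with
  | zero =>
    rw [Nat.zero_add]
    rw [tsum_eq_single i]
    · simp [kpow]
    · intro b hb
      simp [kpow, Ne.symm hb]
  | succ m ih =>
    have : m + 1 + n = (m + n) + 1 := by omega
    rw [this]
    show kmul p (kpow p (m + n)) i j = _
    unfold kmul
    calc ∑' k, p i k * kpow p (m + n) k j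
        = ∑' k, p i k * ∑' l, kpow p m k l * kpow p n l j := by
          congr 1; ext k; rw [ih]
      _ = ∑' k, ∑' l, p i k * (kpow p m k l * kpow p n l j) := by
          congr 1; ext k; rw [ENNReal.tsum_mul_left]
      _ = ∑' l, ∑' k, p i k * (kpow p m k l * kpow p n l j) := ENNReal.tsum_comm
      _ = ∑' l, (∑' k, p i k * kpow p m k l) * kpow p n l j := by
          congr 1; ext l
          rw [← ENNReal.tsum_mul_right]
          congr 1; ext k; ring
      _ = ∑' l, kpow p (m + 1) i l * kpow p n l j := rfl

lemma kpow_mul_le {α : Type*} [DecidableEq α] (p : α → α → ℝ≥0∞) (m n : ℕ) (i k j : α) :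
    kpow p m i k * kpow p n k j ≤ kpow p (m + n) i j := by
  rw [kpow_add]
  exact ENNReal.le_tsum k

/-- If all row sums of `p` are at most one, so are those of `kpow p n`. -/
lemma kpow_rowsum_le_one {α : Type*} [DecidableEq α] {p : α → α → ℝ≥0∞}
    (hp : ∀ i, ∑' j, p i j ≤ 1) (n : ℕ) (i : α) : ∑' j, kpow p n i j ≤ 1 := by
  induction n generalizing i with
  | zero =>
    rw [tsum_eq_single i]
    · simp [kpow]
    · intro b hb; simp [kpow, Ne.symm hb]
  | succ n ih =>
    show ∑' j, kmul p (kpow p n) i j ≤ 1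
    unfold kmul
    calc ∑' j, ∑' k, p i k * kpow p n k j
        = ∑' k, ∑' j, p i k * kpow p n k j := ENNReal.tsum_comm
      _ = ∑' k, p i k * ∑' j, kpow p n k j := by
          congr 1; ext k; rw [ENNReal.tsum_mul_left]
      _ ≤ ∑' k, p i k * 1 := by
          exact ENNReal.tsum_le_tsum fun k => mul_le_mul_right (ih k) _
      _ ≤ 1 := by simpa using hp i

lemma kpow_le_one {α : Type*} [DecidableEq α] {p : α → α → ℝ≥0∞}
    (hp : ∀ i, ∑' j, p i j ≤ 1) (n : ℕ) (i j : α) : kpow p n i j ≤ 1 :=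
  le_trans (ENNReal.le_tsum j) (kpow_rowsum_le_one hp n i)


/-- embedding of `𝕊₊` into `𝕊`. -/
def emb : (ℕ × ℕ × Fin s₀) → (ℤ × ℤ × Fin s₀) := fun y => ((y.1 : ℤ), (y.2.1 : ℤ), y.2.2)

lemma emb_injective : Function.Injective (emb (s₀ := s₀)) := by
  rintro ⟨a, b, c⟩ ⟨d, e, f⟩ h
  simp [emb, Prod.ext_iff] at h
  simp [Prod.ext_iff, h.1, h.2.1, h.2.2]

lemma kerPlus_eq_ker (A : ℤ → ℤ → Matrix (Fin s₀) (Fin s₀) ℝ) (y y' : ℕ × ℕ × Fin s₀) :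
    kerPlus A y y' = ker A (emb y) (emb y') := rfl

lemma ker_tsum (A : ℤ → ℤ → Matrix (Fin s₀) (Fin s₀) ℝ) (hA : IsMMRW A)
    (y : ℤ × ℤ × Fin s₀) (g : ℤ × ℤ × Fin s₀ → ℝ≥0∞) :
    ∑' z, ker A y z * g z =
      ∑ i ∈ Finset.Icc (-1 : ℤ) 1, ∑ k ∈ Finset.Icc (-1 : ℤ) 1, ∑ b,
        ENNReal.ofReal (A i k y.2.2 b) * g (y.1 + i, y.2.1 + k, b) := by
  obtain ⟨y₁, y₂, j⟩ := y
  rw [← Equiv.tsum_eq ((Equiv.addLeft y₁).prodCongr ((Equiv.addLeft y₂).prodCongr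
    (Equiv.refl (Fin s₀)))) (fun z => ker A (y₁, y₂, j) z * g z)]
  have hterm : ∀ z : ℤ × ℤ × Fin s₀,
      (fun z => ker A (y₁, y₂, j) z * g z)
        (((Equiv.addLeft y₁).prodCongr ((Equiv.addLeft y₂).prodCongr (Equiv.refl (Fin s₀)))) z) =
        ENNReal.ofReal (A z.1 z.2.1 j z.2.2) * g (y₁ + z.1, y₂ + z.2.1, z.2.2) := by
    rintro ⟨i, k, b⟩
    simp [ker]
  rw [tsum_congr hterm]
  rw [tsum_eq_sum (s := Finset.Icc (-1 : ℤ) 1 ×ˢ (Finset.Icc (-1 : ℤ) 1 ×ˢ Finset.univ))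
    (by
      rintro ⟨i, k, b⟩ hz
      simp only [Finset.mem_product, Finset.mem_univ, and_true] at hz
      rw [not_and_or] at hz
      have : A i k = 0 := hA.skipfree i k hz
      simp [this])]
  rw [Finset.sum_product]
  refine Finset.sum_congr rfl fun i _ => ?_
  rw [Finset.sum_product]

lemma kerPlus_tsum_le (A : ℤ → ℤ → Matrix (Fin s₀) (Fin s₀) ℝ) (hA : IsMMRW A)
    (y : ℕ × ℕ × Fin s₀) (g : ℤ × ℤ × Fin s₀ → ℝ≥0∞) :
    ∑' z, kerPlus A y z * g (emb z) ≤
      ∑ i ∈ Finset.Icc (-1 : ℤ) 1, ∑ k ∈ Finset.Icc (-1 : ℤ) 1, ∑ b,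
        ENNReal.ofReal (A i k y.2.2 b) * g ((y.1 : ℤ) + i, (y.2.1 : ℤ) + k, b) := by
  calc ∑' z, kerPlus A y z * g (emb z)
      = ∑' z : ℕ × ℕ × Fin s₀, (fun w => ker A (emb y) w * g w) (emb z) := by
        exact tsum_congr fun z => by rw [kerPlus_eq_ker]
    _ ≤ ∑' w, ker A (emb y) w * g w :=
        ENNReal.tsum_comp_le_tsum_of_injective emb_injective _
    _ = _ := ker_tsum A hA (emb y) g

lemma kerPlus_rowsum_le_one (A : ℤ → ℤ → Matrix (Fin s₀) (Fin s₀) ℝ) (hA : IsMMRW A)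
    (y : ℕ × ℕ × Fin s₀) : ∑' z, kerPlus A y z ≤ 1 := by
  have := kerPlus_tsum_le A hA y (fun _ => 1)
  simp only [mul_one] at this
  refine le_trans (by simpa using this) ?_
  have : ∀ i ∈ Finset.Icc (-1 : ℤ) 1, ∀ k ∈ Finset.Icc (-1 : ℤ) 1,
      ∑ b, ENNReal.ofReal (A i k y.2.2 b) = ENNReal.ofReal (∑ b, A i k y.2.2 b) := by
    intro i _ k _
    rw [ENNReal.ofReal_sum_of_nonneg fun b _ => hA.nonneg i k y.2.2 b]
  calc ∑ i ∈ Finset.Icc (-1 : ℤ) 1, ∑ k ∈ Finset.Icc (-1 : ℤ) 1, ∑ b,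
        ENNReal.ofReal (A i k y.2.2 b)
      = ENNReal.ofReal (∑ i ∈ Finset.Icc (-1 : ℤ) 1, ∑ k ∈ Finset.Icc (-1 : ℤ) 1, ∑ b,
          A i k y.2.2 b) := by
        rw [ENNReal.ofReal_sum_of_nonneg fun i _ =>
          Finset.sum_nonneg fun k _ => Finset.sum_nonneg fun b _ => hA.nonneg i k y.2.2 b]
        refine Finset.sum_congr rfl fun i hi => ?_
        rw [ENNReal.ofReal_sum_of_nonneg fun k _ =>
          Finset.sum_nonneg fun b _ => hA.nonneg i k y.2.2 b]
        exact Finset.sum_congr rfl fun k hk => this i hi k hk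
    _ = 1 := by rw [hA.stochastic]; simp
    _ ≤ 1 := le_refl 1


/-! ### Shift lemmas and occupation lower bounds -/

def sh (v : ℕ × ℕ) (y : ℕ × ℕ × Fin s₀) : ℕ × ℕ × Fin s₀ :=
  (y.1 + v.1, y.2.1 + v.2, y.2.2)

lemma sh_injective (v : ℕ × ℕ) : Function.Injective (sh (s₀ := s₀) v) := by
  rintro ⟨a, b, c⟩ ⟨d, e, f⟩ h
  simp [sh, Prod.ext_iff] at h
  simp [Prod.ext_iff, h.1, h.2.1, h.2.2]

lemma kerPlus_sh (A : ℤ → ℤ → Matrix (Fin s₀) (Fin s₀) ℝ) (v : ℕ × ℕ)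
    (y y' : ℕ × ℕ × Fin s₀) : kerPlus A (sh v y) (sh v y') = kerPlus A y y' := by
  simp only [kerPlus, sh]
  congr 2 <;> push_cast <;> ring

lemma kpow_kerPlus_sh_le (A : ℤ → ℤ → Matrix (Fin s₀) (Fin s₀) ℝ) (v : ℕ × ℕ) (n : ℕ) :
    ∀ y y' : ℕ × ℕ × Fin s₀,
      kpow (kerPlus A) n y y' ≤ kpow (kerPlus A) n (sh v y) (sh v y') := by
  induction n with
  | zero =>
    intro y y'
    show (if y = y' then (1:ℝ≥0∞) else 0) ≤ (if sh v y = sh v y' then (1:ℝ≥0∞) else 0)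
    by_cases h : y = y'
    · simp [h]
    · rw [if_neg h, if_neg fun hc => h (sh_injective v hc)]
  | succ n ih =>
    intro y y'
    show kmul (kerPlus A) (kpow (kerPlus A) n) y y' ≤
      kmul (kerPlus A) (kpow (kerPlus A) n) (sh v y) (sh v y')
    unfold kmul
    calc ∑' w, kerPlus A y w * kpow (kerPlus A) n w y'
        ≤ ∑' w, kerPlus A (sh v y) (sh v w) * kpow (kerPlus A) n (sh v w) (sh v y') := by
          refine ENNReal.tsum_le_tsum fun w => ?_
          rw [kerPlus_sh]
          exact mul_le_mul_right (ih w y') _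
      _ ≤ ∑' z, kerPlus A (sh v y) z * kpow (kerPlus A) n z (sh v y') :=
          ENNReal.tsum_comp_le_tsum_of_injective (sh_injective v)
            (fun z => kerPlus A (sh v y) z * kpow (kerPlus A) n z (sh v y'))

lemma kpow_chain (A : ℤ → ℤ → Matrix (Fin s₀) (Fin s₀) ℝ) {n₁ n₀ : ℕ}
    {x₁ x₂ l₁ l₂ c₁ c₂ : ℕ} {j j' : Fin s₀} {δ₁ δ : ℝ≥0∞}
    (h₁ : δ₁ ≤ kpow (kerPlus A) n₁ (x₁, x₂, j) (l₁, l₂, j'))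
    (h₀ : δ ≤ kpow (kerPlus A) n₀ (l₁, l₂, j') (l₁ + c₁, l₂ + c₂, j')) (k : ℕ) :
    δ₁ * δ ^ k ≤ kpow (kerPlus A) (n₁ + k * n₀) (x₁, x₂, j)
      (l₁ + k * c₁, l₂ + k * c₂, j') := by
  induction k with
  | zero => simpa using h₁
  | succ k ih =>
    have hstep : δ ≤ kpow (kerPlus A) n₀ (l₁ + k * c₁, l₂ + k * c₂, j')
        (l₁ + (k + 1) * c₁, l₂ + (k + 1) * c₂, j') := by
      refine le_trans h₀ (le_trans (kpow_kerPlus_sh_le A (k * c₁, k * c₂) n₀ _ _) (le_of_eq ?_))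
      have e1 : sh (k * c₁, k * c₂) (l₁, l₂, j') = (l₁ + k * c₁, l₂ + k * c₂, j') := rfl
      have e2 : sh (k * c₁, k * c₂) (l₁ + c₁, l₂ + c₂, j') =
          (l₁ + (k + 1) * c₁, l₂ + (k + 1) * c₂, j') := by
        simp only [sh, Prod.mk.injEq, Prod.ext_iff]
        exact ⟨by ring, by ring, trivial⟩
      rw [e1, e2]
    calc δ₁ * δ ^ (k + 1) = (δ₁ * δ ^ k) * δ := by ring
      _ ≤ kpow (kerPlus A) (n₁ + k * n₀) (x₁, x₂, j) (l₁ + k * c₁, l₂ + k * c₂, j') *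
            kpow (kerPlus A) n₀ (l₁ + k * c₁, l₂ + k * c₂, j')
              (l₁ + (k + 1) * c₁, l₂ + (k + 1) * c₂, j') := mul_le_mul' ih hstep
      _ ≤ kpow (kerPlus A) (n₁ + k * n₀ + n₀) (x₁, x₂, j)
            (l₁ + (k + 1) * c₁, l₂ + (k + 1) * c₂, j') := kpow_mul_le _ _ _ _ _ _
      _ = kpow (kerPlus A) (n₁ + (k + 1) * n₀) (x₁, x₂, j)
            (l₁ + (k + 1) * c₁, l₂ + (k + 1) * c₂, j') := by ring_nf

lemma exists_occ_lower (A : ℤ → ℤ → Matrix (Fin s₀) (Fin s₀) ℝ) (hA : IsMMRW A)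
    (h3 : Assumption3 A) (x₁ x₂ l₁ l₂ c₁ c₂ : ℕ) (j j' : Fin s₀) :
    ∃ δ₁ δ : ℝ≥0∞, 0 < δ₁ ∧ δ₁ ≤ 1 ∧ 0 < δ ∧ δ ≤ 1 ∧
      ∀ k, δ₁ * δ ^ k ≤ occ A (x₁, x₂, j) (k * c₁ + l₁, k * c₂ + l₂, j') := by
  obtain ⟨n₁, -, hδ₁⟩ := h3 (x₁, x₂, j) (l₁, l₂, j')
  obtain ⟨n₀, -, hδ⟩ := h3 (l₁, l₂, j') (l₁ + c₁, l₂ + c₂, j')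
  have hrow := kerPlus_rowsum_le_one A hA
  refine ⟨_, _, hδ₁, kpow_le_one hrow _ _ _, hδ, kpow_le_one hrow _ _ _, fun k => ?_⟩
  unfold occ
  refine le_trans ?_ (ENNReal.le_tsum (n₁ + k * n₀))
  have hco : ((k * c₁ + l₁ : ℕ), (k * c₂ + l₂ : ℕ), j') =
      ((l₁ + k * c₁ : ℕ), (l₂ + k * c₂ : ℕ), j') := by
    simp only [Prod.mk.injEq]
    exact ⟨by ring, by ring, trivial⟩
  rw [hco]
  exact kpow_chain A (le_refl _) (le_refl _) k

/-- Max principle: a harmonic vector of an "irreducible" row-stochastic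
nonneg matrix is constant. -/
lemma harmonic_const (M : Matrix (Fin s₀) (Fin s₀) ℝ)
    (hnn : ∀ a b, 0 ≤ M a b) (hrow : ∀ a, ∑ b, M a b = 1)
    (hirr : ∀ a b, ∃ n, 0 < (M ^ n) a b)
    (v : Fin s₀ → ℝ) (hv : M.mulVec v = v) (j j' : Fin s₀) : v j = v j' := by
  have hpow_nn : ∀ n a b, 0 ≤ (M ^ n) a b := by
    intro n
    induction n with
    | zero => intro a b; rw [pow_zero]; by_cases h : a = b <;> simp [Matrix.one_apply, h]
    | succ n ih =>
      intro a b
      rw [pow_succ, Matrix.mul_apply]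
      exact Finset.sum_nonneg fun k _ => mul_nonneg (ih a k) (hnn k b)
  have hpow_row : ∀ n a, ∑ b, (M ^ n) a b = 1 := by
    intro n
    induction n with
    | zero => intro a; simp [Matrix.one_apply]
    | succ n ih =>
      intro a
      simp only [pow_succ, Matrix.mul_apply]
      rw [Finset.sum_comm]
      calc ∑ k, ∑ b, (M ^ n) a k * M k b = ∑ k, (M ^ n) a k * ∑ b, M k b := by
            simp [Finset.mul_sum]
        _ = 1 := by simp [hrow, ih]
  have hpow_harm : ∀ n, (M ^ n).mulVec v = v := by
    intro n
    induction n with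
    | zero => simp
    | succ n ih => rw [pow_succ', ← Matrix.mulVec_mulVec, ih, hv]
  -- take the max
  obtain ⟨j₀, -, hj₀⟩ := Finset.exists_max_image Finset.univ v ⟨j, Finset.mem_univ j⟩
  have key : ∀ b, v b = v j₀ := by
    intro b
    obtain ⟨n, hn⟩ := hirr j₀ b
    have h1 : ∑ k, (M ^ n) j₀ k * (v j₀ - v k) = 0 := by
      have h2 : ∑ k, (M ^ n) j₀ k * v k = v j₀ := by
        have := congrFun (hpow_harm n) j₀
        simpa [Matrix.mulVec, dotProduct] using this
      simp only [mul_sub, Finset.sum_sub_distrib, h2, ← Finset.sum_mul, hpow_row n j₀]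
      ring
    have h3 : ∀ k ∈ Finset.univ, 0 ≤ (M ^ n) j₀ k * (v j₀ - v k) :=
      fun k _ => mul_nonneg (hpow_nn n j₀ k) (sub_nonneg.2 (hj₀ k (Finset.mem_univ k)))
    have h4 := (Finset.sum_eq_zero_iff_of_nonneg h3).1 h1 b (Finset.mem_univ b)
    have h5 : v j₀ - v b = 0 := by
      by_contra hne
      exact hne (by
        rcases mul_eq_zero.1 h4 with h | h
        · exact absurd h (ne_of_gt hn)
        · exact h)
    linarith
  rw [key j, key j']

/-- Poisson equation solvability. -/
lemma exists_poisson (hs : 0 < s₀) (M : Matrix (Fin s₀) (Fin s₀) ℝ)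
    (hnn : ∀ a b, 0 ≤ M a b) (hrow : ∀ a, ∑ b, M a b = 1)
    (hirr : ∀ a b, ∃ n, 0 < (M ^ n) a b)
    (π : Fin s₀ → ℝ) (hπsum : ∑ a, π a = 1) (hπstat : ∀ b, ∑ a, π a * M a b = π b)
    (u : Fin s₀ → ℝ) (hu : ∑ a, π a * u a = 0) :
    ∃ g : Fin s₀ → ℝ, ∀ j, u j = g j - ∑ b, M j b * g b := by
  haveI : NeZero s₀ := ⟨hs.ne'⟩
  set L : (Fin s₀ → ℝ) →ₗ[ℝ] (Fin s₀ → ℝ) := Matrix.mulVecLin (1 - M) with hL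
  have hone : (fun _ => (1:ℝ)) ∈ LinearMap.ker L := by
    rw [LinearMap.mem_ker]
    funext b
    simp only [hL, Matrix.mulVecLin_apply, Matrix.mulVec, dotProduct,
      Matrix.sub_apply, Matrix.one_apply]
    simp [sub_mul, Finset.sum_sub_distrib, hrow b]
  have hker : LinearMap.ker L = Submodule.span ℝ {(fun _ => (1:ℝ))} := by
    apply le_antisymm
    · intro x hx
      rw [LinearMap.mem_ker] at hx
      have hharm : M.mulVec x = x := by
        have : (1 - M).mulVec x = 0 := hx
        rw [Matrix.sub_mulVec, Matrix.one_mulVec, sub_eq_zero] at this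
        exact this.symm
      have hconst : x = x ⟨0, hs⟩ • (fun _ => (1:ℝ)) := by
        funext b
        simp [harmonic_const M hnn hrow hirr x hharm b ⟨0, hs⟩]
      rw [Submodule.mem_span_singleton]
      exact ⟨x ⟨0, hs⟩, hconst.symm⟩
    · rw [Submodule.span_le, Set.singleton_subset_iff]
      exact hone
  have hone_ne : (fun _ => (1:ℝ)) ≠ (0 : Fin s₀ → ℝ) := by
    intro h
    have := congrFun h ⟨0, hs⟩
    norm_num at this
  have hker_rank : Module.finrank ℝ (LinearMap.ker L) = 1 := by
    rw [hker]; exact finrank_span_singleton hone_ne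
  -- the functional v ↦ π ⬝ v
  set φ : (Fin s₀ → ℝ) →ₗ[ℝ] ℝ :=
    { toFun := fun v => ∑ a, π a * v a
      map_add' := by intro x y; simp [mul_add, Finset.sum_add_distrib]
      map_smul' := by intro c x; simp [Finset.mul_sum]; congr 1; funext a; ring } with hφ
  have hφ_surj : Function.Surjective φ := by
    intro r
    refine ⟨fun _ => r, ?_⟩
    simp only [hφ, LinearMap.coe_mk, AddHom.coe_mk]
    rw [← Finset.sum_mul, hπsum, one_mul]
  have hφ_range : LinearMap.range φ = ⊤ := LinearMap.range_eq_top.2 hφ_surj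
  have hφ_ker_rank : Module.finrank ℝ (LinearMap.ker φ) = s₀ - 1 := by
    have h := LinearMap.finrank_range_add_finrank_ker φ
    rw [hφ_range, finrank_top, Module.finrank_self,
      Module.finrank_fintype_fun_eq_card, Fintype.card_fin] at h
    omega
  have hrange_rank : Module.finrank ℝ (LinearMap.range L) = s₀ - 1 := by
    have h := LinearMap.finrank_range_add_finrank_ker L
    rw [hker_rank, Module.finrank_fintype_fun_eq_card, Fintype.card_fin] at h
    omega
  have hle : LinearMap.range L ≤ LinearMap.ker φ := by
    rintro _ ⟨g, rfl⟩
    rw [LinearMap.mem_ker]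
    simp only [hφ, hL, LinearMap.coe_mk, AddHom.coe_mk, Matrix.mulVecLin_apply,
      Matrix.mulVec, dotProduct, Matrix.sub_apply, Matrix.one_apply]
    have expand : ∀ a, π a * (∑ b, ((if a = b then (1:ℝ) else 0) - M a b) * g b) =
        π a * g a - π a * ∑ b, M a b * g b := by
      intro a
      have h6 : ∑ b, ((if a = b then (1:ℝ) else 0) - M a b) * g b =
          g a - ∑ b, M a b * g b := by
        simp [sub_mul, Finset.sum_sub_distrib, ite_mul]
      rw [h6]
      ring
    rw [Finset.sum_congr rfl fun a _ => expand a, Finset.sum_sub_distrib]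
    have swap : ∑ a, π a * ∑ b, M a b * g b = ∑ b, (∑ a, π a * M a b) * g b := by
      calc ∑ a, π a * ∑ b, M a b * g b = ∑ a, ∑ b, π a * (M a b * g b) := by
            simp [Finset.mul_sum]
        _ = ∑ b, ∑ a, π a * (M a b * g b) := Finset.sum_comm
        _ = ∑ b, (∑ a, π a * M a b) * g b := by
            refine Finset.sum_congr rfl fun b _ => ?_
            rw [Finset.sum_mul]
            exact Finset.sum_congr rfl fun a _ => by ring
    rw [swap]
    simp only [hπstat]
    exact sub_self _
  have heq : LinearMap.range L = LinearMap.ker φ :=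
    Submodule.eq_of_le_of_finrank_eq hle (by rw [hrange_rank, hφ_ker_rank])
  have hu_mem : u ∈ LinearMap.ker φ := by rw [LinearMap.mem_ker]; exact hu
  rw [← heq] at hu_mem
  obtain ⟨g, hg⟩ := hu_mem
  refine ⟨g, fun j => ?_⟩
  have := congrFun hg j
  simp only [hL, Matrix.mulVecLin_apply, Matrix.mulVec, dotProduct,
    Matrix.sub_apply, Matrix.one_apply] at this
  rw [← this]
  rw [Finset.sum_congr rfl (fun b _ => sub_mul ((if j = b then (1:ℝ) else 0)) (M j b) (g b)),
    Finset.sum_sub_distrib]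
  simp


/-! ### The matrix `A_{*,*}` and its properties -/

noncomputable def Astar (A : ℤ → ℤ → Matrix (Fin s₀) (Fin s₀) ℝ) :
    Matrix (Fin s₀) (Fin s₀) ℝ :=
  ∑ i ∈ Finset.Icc (-1 : ℤ) 1, ∑ k ∈ Finset.Icc (-1 : ℤ) 1, A i k

lemma Astar_apply (A : ℤ → ℤ → Matrix (Fin s₀) (Fin s₀) ℝ) (a b : Fin s₀) :
    Astar A a b = ∑ i ∈ Finset.Icc (-1 : ℤ) 1, ∑ k ∈ Finset.Icc (-1 : ℤ) 1, A i k a b := by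
  simp [Astar, Matrix.sum_apply]

lemma Astar_nonneg (A : ℤ → ℤ → Matrix (Fin s₀) (Fin s₀) ℝ) (hA : IsMMRW A) (a b : Fin s₀) :
    0 ≤ Astar A a b := by
  rw [Astar_apply]
  exact Finset.sum_nonneg fun i _ => Finset.sum_nonneg fun k _ => hA.nonneg i k a b

lemma Astar_rowsum (A : ℤ → ℤ → Matrix (Fin s₀) (Fin s₀) ℝ) (hA : IsMMRW A) (a : Fin s₀) :
    ∑ b, Astar A a b = 1 := by
  simp only [Astar_apply]
  rw [Finset.sum_comm]
  rw [Finset.sum_congr rfl fun i _ => Finset.sum_comm]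
  exact hA.stochastic a

lemma mul_pow_apply (A : ℤ → ℤ → Matrix (Fin s₀) (Fin s₀) ℝ)
    (X : Matrix (Fin s₀) (Fin s₀) ℝ) (j j' : Fin s₀) :
    (Astar A * X) j j' = ∑ i ∈ Finset.Icc (-1 : ℤ) 1, ∑ k ∈ Finset.Icc (-1 : ℤ) 1, ∑ b,
      A i k j b * X b j' := by
  calc (Astar A * X) j j' = ∑ b, (∑ i ∈ Finset.Icc (-1 : ℤ) 1, ∑ k ∈ Finset.Icc (-1 : ℤ) 1,
        A i k j b) * X b j' := by
        simp [Matrix.mul_apply, Astar_apply]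
    _ = ∑ b, ∑ i ∈ Finset.Icc (-1 : ℤ) 1, ∑ k ∈ Finset.Icc (-1 : ℤ) 1,
        A i k j b * X b j' := by
        simp [Finset.sum_mul]
    _ = ∑ i ∈ Finset.Icc (-1 : ℤ) 1, ∑ b, ∑ k ∈ Finset.Icc (-1 : ℤ) 1,
        A i k j b * X b j' := Finset.sum_comm
    _ = _ := Finset.sum_congr rfl fun i _ => Finset.sum_comm

lemma kpow_ker_le (A : ℤ → ℤ → Matrix (Fin s₀) (Fin s₀) ℝ) (hA : IsMMRW A) : ∀ (n : ℕ)
    (y y' : ℤ × ℤ × Fin s₀),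
    kpow (ker A) n y y' ≤ ENNReal.ofReal ((Astar A ^ n) y.2.2 y'.2.2) := by
  have hpow_nn : ∀ n (a b : Fin s₀), 0 ≤ (Astar A ^ n) a b := by
    intro n
    induction n with
    | zero => intro a b; rw [pow_zero]; by_cases h : a = b <;> simp [Matrix.one_apply, h]
    | succ n ih =>
      intro a b
      rw [pow_succ, Matrix.mul_apply]
      exact Finset.sum_nonneg fun c _ => mul_nonneg (ih a c) (Astar_nonneg A hA c b)
  intro n
  induction n with
  | zero =>
    intro y y'
    show (if y = y' then (1:ℝ≥0∞) else 0) ≤ _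
    by_cases h : y = y'
    · subst h; simp [Matrix.one_apply]
    · rw [if_neg h]; exact zero_le
  | succ n ih =>
    intro y y'
    show kmul (ker A) (kpow (ker A) n) y y' ≤ _
    unfold kmul
    calc ∑' z, ker A y z * kpow (ker A) n z y'
        ≤ ∑' z, ker A y z * ENNReal.ofReal ((Astar A ^ n) z.2.2 y'.2.2) :=
          ENNReal.tsum_le_tsum fun z => mul_le_mul_right (ih z y') _
      _ = ∑ i ∈ Finset.Icc (-1 : ℤ) 1, ∑ k ∈ Finset.Icc (-1 : ℤ) 1, ∑ b,
            ENNReal.ofReal (A i k y.2.2 b) * ENNReal.ofReal ((Astar A ^ n) b y'.2.2) :=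
          ker_tsum A hA y (fun z => ENNReal.ofReal ((Astar A ^ n) z.2.2 y'.2.2))
      _ = ENNReal.ofReal (∑ i ∈ Finset.Icc (-1 : ℤ) 1, ∑ k ∈ Finset.Icc (-1 : ℤ) 1, ∑ b,
            A i k y.2.2 b * (Astar A ^ n) b y'.2.2) := by
          rw [ENNReal.ofReal_sum_of_nonneg fun i _ => Finset.sum_nonneg fun k _ =>
            Finset.sum_nonneg fun b _ => mul_nonneg (hA.nonneg _ _ _ _) (hpow_nn n _ _)]
          refine Finset.sum_congr rfl fun i _ => ?_
          rw [ENNReal.ofReal_sum_of_nonneg fun k _ =>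
            Finset.sum_nonneg fun b _ => mul_nonneg (hA.nonneg _ _ _ _) (hpow_nn n _ _)]
          refine Finset.sum_congr rfl fun k _ => ?_
          rw [ENNReal.ofReal_sum_of_nonneg fun b _ =>
            mul_nonneg (hA.nonneg _ _ _ _) (hpow_nn n _ _)]
          exact Finset.sum_congr rfl fun b _ =>
            (ENNReal.ofReal_mul (hA.nonneg _ _ _ _)).symm
      _ = ENNReal.ofReal ((Astar A ^ (n + 1)) y.2.2 y'.2.2) := by
          rw [pow_succ', mul_pow_apply]

lemma Astar_irr (A : ℤ → ℤ → Matrix (Fin s₀) (Fin s₀) ℝ) (hA : IsMMRW A)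
    (h1 : Assumption1 A) (a b : Fin s₀) : ∃ n, 0 < (Astar A ^ n) a b := by
  obtain ⟨N, hN⟩ := h1 (0, 0, a) (0, 0, b)
  refine ⟨N, ?_⟩
  have hpos := hN N (le_refl N)
  have hle := kpow_ker_le A hA N (0, 0, a) (0, 0, b)
  exact ENNReal.ofReal_pos.1 (lt_of_lt_of_le hpos hle)

/-! ### Existence of a Lyapunov function via the drift condition -/

lemma exists_small_t {abar : ℝ} (φ : Fin s₀ → ℝ → ℝ) (hval : ∀ j, φ j 0 = 1)
    (hd : ∀ j, HasDerivAt (φ j) abar 0) (habar : abar < 0) :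
    ∃ t : ℝ, 0 < t ∧ ∀ j, φ j t < 1 := by
  have key : ∀ j : Fin s₀, ∀ᶠ t in nhdsWithin (0:ℝ) (Set.Ioi 0), φ j t < 1 := by
    intro j
    have hslope := hasDerivAt_iff_tendsto_slope.1 (hd j)
    have hev : ∀ᶠ t in nhdsWithin (0:ℝ) {(0:ℝ)}ᶜ, slope (φ j) 0 t < 0 :=
      hslope.eventually_lt_const habar
    have hmono : nhdsWithin (0:ℝ) (Set.Ioi 0) ≤ nhdsWithin (0:ℝ) {(0:ℝ)}ᶜ :=
      nhdsWithin_mono 0 (fun x hx => ne_of_gt hx)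
    filter_upwards [hmono hev, self_mem_nhdsWithin] with t hlt ht
    rw [slope_def_field, hval j, sub_zero] at hlt
    have ht0 : (0:ℝ) < t := ht
    rcases div_neg_iff.1 hlt with ⟨h1, h2⟩ | ⟨h1, h2⟩ <;> linarith
  have hall : ∀ᶠ t in nhdsWithin (0:ℝ) (Set.Ioi 0), (∀ j, φ j t < 1) ∧ t ∈ Set.Ioi (0:ℝ) :=
    (Filter.eventually_all.2 key).and self_mem_nhdsWithin
  obtain ⟨t, ht1, ht2⟩ := hall.exists
  exact ⟨t, ht2, ht1⟩

lemma hasDerivAt_cexp (c m : ℝ) :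
    HasDerivAt (fun t : ℝ => c * Real.exp (t * m)) (c * m) 0 := by
  have h1 : HasDerivAt (fun t : ℝ => t * m) m 0 := by
    simpa using (hasDerivAt_id (0:ℝ)).mul_const m
  simpa using h1.exp.const_mul c

lemma exists_lyapunov_of_drift (hs : 0 < s₀) (A : ℤ → ℤ → Matrix (Fin s₀) (Fin s₀) ℝ)
    (hA : IsMMRW A) (h1 : Assumption1 A) (π : Fin s₀ → ℝ) (hπ : IsStationary A π)
    (v₁ v₂ : ℝ)
    (hdr : ∑ a, π a * (∑ i ∈ Finset.Icc (-1 : ℤ) 1, ∑ k ∈ Finset.Icc (-1 : ℤ) 1, ∑ b,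
      ((i : ℝ) * v₁ + (k : ℝ) * v₂) * A i k a b) < 0) :
    ∃ (θ₁ θ₂ r : ℝ) (h : Fin s₀ → ℝ), 0 < r ∧ r < 1 ∧ (∀ b, 0 < h b) ∧
      ∀ j, ∑ i ∈ Finset.Icc (-1 : ℤ) 1, ∑ k ∈ Finset.Icc (-1 : ℤ) 1, ∑ b,
        A i k j b * Real.exp ((i : ℝ) * θ₁ + (k : ℝ) * θ₂) * h b ≤ r * h j := by
  haveI : Nonempty (Fin s₀) := ⟨⟨0, hs⟩⟩
  set d : Fin s₀ → ℝ := fun a => ∑ i ∈ Finset.Icc (-1 : ℤ) 1, ∑ k ∈ Finset.Icc (-1 : ℤ) 1,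
    ∑ b, ((i : ℝ) * v₁ + (k : ℝ) * v₂) * A i k a b with hd_def
  set abar : ℝ := ∑ a, π a * d a with habar_def
  have habar_neg : abar < 0 := hdr
  -- Poisson equation
  have hπstat : ∀ b, ∑ a, π a * Astar A a b = π b := by
    intro b
    rw [Finset.sum_congr rfl fun a _ => by rw [Astar_apply]]
    exact hπ.2.2 b
  obtain ⟨g, hg⟩ := exists_poisson hs (Astar A) (Astar_nonneg A hA) (Astar_rowsum A hA)
    (Astar_irr A hA h1) π hπ.2.1 hπstat (fun j => d j - abar)
    (by
      simp only [mul_sub, Finset.sum_sub_distrib, ← habar_def, ← Finset.sum_mul, hπ.2.1]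
      ring)
  -- the functions φ_j
  set φ : Fin s₀ → ℝ → ℝ := fun j t => ∑ i ∈ Finset.Icc (-1 : ℤ) 1,
    ∑ k ∈ Finset.Icc (-1 : ℤ) 1, ∑ b,
      A i k j b * Real.exp (t * ((i : ℝ) * v₁ + (k : ℝ) * v₂ + g b - g j)) with hφ_def
  have hval : ∀ j, φ j 0 = 1 := by
    intro j
    simp only [hφ_def, zero_mul, Real.exp_zero, mul_one]
    exact hA.stochastic j
  have hd : ∀ j, HasDerivAt (φ j) abar 0 := by
    intro j
    have hder : HasDerivAt (φ j) (∑ i ∈ Finset.Icc (-1 : ℤ) 1, ∑ k ∈ Finset.Icc (-1 : ℤ) 1,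
        ∑ b, A i k j b * ((i : ℝ) * v₁ + (k : ℝ) * v₂ + g b - g j)) 0 := by
      refine HasDerivAt.fun_sum fun i _ => HasDerivAt.fun_sum fun k _ => HasDerivAt.fun_sum fun b _ => ?_
      exact hasDerivAt_cexp (A i k j b) _
    have hDj : ∑ i ∈ Finset.Icc (-1 : ℤ) 1, ∑ k ∈ Finset.Icc (-1 : ℤ) 1,
        ∑ b, A i k j b * ((i : ℝ) * v₁ + (k : ℝ) * v₂ + g b - g j) = abar := by
      have split : ∀ i ∈ Finset.Icc (-1 : ℤ) 1, ∀ k ∈ Finset.Icc (-1 : ℤ) 1, ∀ b : Fin s₀,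
          A i k j b * ((i : ℝ) * v₁ + (k : ℝ) * v₂ + g b - g j) =
            ((i : ℝ) * v₁ + (k : ℝ) * v₂) * A i k j b + A i k j b * (g b - g j) := by
        intro i _ k _ b; ring
      rw [Finset.sum_congr rfl fun i hi => Finset.sum_congr rfl fun k hk =>
        Finset.sum_congr rfl fun b _ => split i hi k hk b]
      simp only [Finset.sum_add_distrib]
      have hpart2 : ∑ i ∈ Finset.Icc (-1 : ℤ) 1, ∑ k ∈ Finset.Icc (-1 : ℤ) 1,
          ∑ b, A i k j b * (g b - g j) = ∑ b, Astar A j b * (g b - g j) := by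
        calc ∑ i ∈ Finset.Icc (-1 : ℤ) 1, ∑ k ∈ Finset.Icc (-1 : ℤ) 1,
              ∑ b, A i k j b * (g b - g j)
            = ∑ i ∈ Finset.Icc (-1 : ℤ) 1, ∑ b, ∑ k ∈ Finset.Icc (-1 : ℤ) 1,
              A i k j b * (g b - g j) := Finset.sum_congr rfl fun i _ => Finset.sum_comm
          _ = ∑ b, ∑ i ∈ Finset.Icc (-1 : ℤ) 1, ∑ k ∈ Finset.Icc (-1 : ℤ) 1,
              A i k j b * (g b - g j) := Finset.sum_comm
          _ = ∑ b, Astar A j b * (g b - g j) := by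
              refine Finset.sum_congr rfl fun b _ => ?_
              rw [Astar_apply, Finset.sum_mul]
              exact Finset.sum_congr rfl fun i _ => (Finset.sum_mul _ _ _).symm
      rw [hpart2]
      have hpart3 : ∑ b, Astar A j b * (g b - g j) = (∑ b, Astar A j b * g b) - g j := by
        simp only [mul_sub, Finset.sum_sub_distrib, ← Finset.sum_mul, Astar_rowsum A hA j]
        ring
      rw [hpart3]
      have := hg j
      have : (∑ b, Astar A j b * g b) - g j = abar - d j := by linarith [hg j]
      rw [this]
      show d j + (abar - d j) = abar
      ring
    rw [← hDj]
    exact hder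
  obtain ⟨t, ht, hφt⟩ := exists_small_t φ hval hd habar_neg
  -- assemble
  set S : ℝ := Finset.univ.sup' Finset.univ_nonempty (fun j => φ j t) with hS_def
  set r : ℝ := max S (1/2) with hr_def
  have hr1 : r < 1 := max_lt ((Finset.sup'_lt_iff _).2 fun j _ => hφt j) (by norm_num)
  have hr0 : 0 < r := lt_of_lt_of_le (by norm_num) (le_max_right _ _)
  refine ⟨t * v₁, t * v₂, r, fun b => Real.exp (t * g b), hr0, hr1,
    fun b => Real.exp_pos _, fun j => ?_⟩
  have hterm : ∀ i ∈ Finset.Icc (-1 : ℤ) 1, ∀ k ∈ Finset.Icc (-1 : ℤ) 1, ∀ b : Fin s₀,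
      A i k j b * Real.exp ((i : ℝ) * (t * v₁) + (k : ℝ) * (t * v₂)) * Real.exp (t * g b) =
        (A i k j b * Real.exp (t * ((i : ℝ) * v₁ + (k : ℝ) * v₂ + g b - g j))) *
          Real.exp (t * g j) := by
    intro i _ k _ b
    rw [mul_assoc, mul_assoc, ← Real.exp_add, ← Real.exp_add]
    congr 2
    ring
  calc ∑ i ∈ Finset.Icc (-1 : ℤ) 1, ∑ k ∈ Finset.Icc (-1 : ℤ) 1, ∑ b,
        A i k j b * Real.exp ((i : ℝ) * (t * v₁) + (k : ℝ) * (t * v₂)) * Real.exp (t * g b)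
      = ∑ i ∈ Finset.Icc (-1 : ℤ) 1, ∑ k ∈ Finset.Icc (-1 : ℤ) 1, ∑ b,
        (A i k j b * Real.exp (t * ((i : ℝ) * v₁ + (k : ℝ) * v₂ + g b - g j))) *
          Real.exp (t * g j) :=
        Finset.sum_congr rfl fun i hi => Finset.sum_congr rfl fun k hk =>
          Finset.sum_congr rfl fun b _ => hterm i hi k hk b
    _ = φ j t * Real.exp (t * g j) := by
        simp only [← Finset.sum_mul]
        rfl
    _ ≤ r * Real.exp (t * g j) := by
        refine mul_le_mul_of_nonneg_right ?_ (Real.exp_pos _).le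
        exact le_trans (Finset.le_sup' (fun j => φ j t) (Finset.mem_univ j)) (le_max_left _ _)


lemma sum_Icc_expand {M : Type*} [AddCommMonoid M] (f : ℤ → M) :
    ∑ i ∈ Finset.Icc (-1 : ℤ) 1, f i = f (-1) + f 0 + f 1 := by
  rw [show Finset.Icc (-1 : ℤ) 1 = {-1, 0, 1} by decide,
    show ({-1, 0, 1} : Finset ℤ) = insert (-1) (insert 0 {1}) from rfl,
    Finset.sum_insert (by decide), Finset.sum_insert (by decide), Finset.sum_singleton,
    ← add_assoc]

lemma exists_lyapunov (hs : 0 < s₀) (A : ℤ → ℤ → Matrix (Fin s₀) (Fin s₀) ℝ)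
    (hA : IsMMRW A) (h1 : Assumption1 A) (h2 : Assumption2 A) :
    ∃ (θ₁ θ₂ r : ℝ) (h : Fin s₀ → ℝ), 0 < r ∧ r < 1 ∧ (∀ b, 0 < h b) ∧
      ∀ j, ∑ i ∈ Finset.Icc (-1 : ℤ) 1, ∑ k ∈ Finset.Icc (-1 : ℤ) 1, ∑ b,
        A i k j b * Real.exp ((i : ℝ) * θ₁ + (k : ℝ) * θ₂) * h b ≤ r * h j := by
  obtain ⟨π, hπ, hcase⟩ := h2
  rcases hcase with ha | ha
  · refine exists_lyapunov_of_drift hs A hA h1 π hπ 1 0 ?_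
    have key : ∀ a : Fin s₀, (∑ i ∈ Finset.Icc (-1 : ℤ) 1, ∑ k ∈ Finset.Icc (-1 : ℤ) 1,
        ∑ b, ((i : ℝ) * 1 + (k : ℝ) * 0) * A i k a b) =
          ∑ b, ∑ k ∈ Finset.Icc (-1 : ℤ) 1, (A 1 k a b - A (-1) k a b) := by
      intro a
      have e2 : ∑ b, ∑ k ∈ Finset.Icc (-1 : ℤ) 1, (A 1 k a b - A (-1) k a b) =
          (∑ k ∈ Finset.Icc (-1 : ℤ) 1, ∑ b, A 1 k a b) -
            (∑ k ∈ Finset.Icc (-1 : ℤ) 1, ∑ b, A (-1) k a b) := by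
        rw [Finset.sum_comm]
        simp [Finset.sum_sub_distrib]
      rw [e2, sum_Icc_expand]
      push_cast
      simp only [mul_one, mul_zero, add_zero, neg_mul, one_mul, zero_mul,
        Finset.sum_const_zero, Finset.sum_neg_distrib]
      ring
    calc ∑ a, π a * (∑ i ∈ Finset.Icc (-1 : ℤ) 1, ∑ k ∈ Finset.Icc (-1 : ℤ) 1,
          ∑ b, ((i : ℝ) * 1 + (k : ℝ) * 0) * A i k a b)
        = a1 A π := Finset.sum_congr rfl fun a _ => by rw [key a]
      _ < 0 := ha
  · refine exists_lyapunov_of_drift hs A hA h1 π hπ 0 1 ?_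
    have key : ∀ a : Fin s₀, (∑ i ∈ Finset.Icc (-1 : ℤ) 1, ∑ k ∈ Finset.Icc (-1 : ℤ) 1,
        ∑ b, ((i : ℝ) * 0 + (k : ℝ) * 1) * A i k a b) =
          ∑ b, ∑ k ∈ Finset.Icc (-1 : ℤ) 1, (A k 1 a b - A k (-1) a b) := by
      intro a
      have e2 : ∑ b, ∑ k ∈ Finset.Icc (-1 : ℤ) 1, (A k 1 a b - A k (-1) a b) =
          (∑ k ∈ Finset.Icc (-1 : ℤ) 1, ∑ b, A k 1 a b) -
            (∑ k ∈ Finset.Icc (-1 : ℤ) 1, ∑ b, A k (-1) a b) := by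
        rw [Finset.sum_comm]
        simp [Finset.sum_sub_distrib]
      rw [e2, Finset.sum_comm, sum_Icc_expand]
      push_cast
      simp only [mul_one, mul_zero, add_zero, zero_add, neg_mul, neg_one_mul, one_mul,
        zero_mul, Finset.sum_const_zero, Finset.sum_neg_distrib]
      ring
    calc ∑ a, π a * (∑ i ∈ Finset.Icc (-1 : ℤ) 1, ∑ k ∈ Finset.Icc (-1 : ℤ) 1,
          ∑ b, ((i : ℝ) * 0 + (k : ℝ) * 1) * A i k a b)
        = a2 A π := Finset.sum_congr rfl fun a _ => by rw [key a]
      _ < 0 := ha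


/-! ### Finiteness of `Φ_x` on an open set -/

lemma weight_step (A : ℤ → ℤ → Matrix (Fin s₀) (Fin s₀) ℝ) (hA : IsMMRW A)
    {θ₁ θ₂ r : ℝ} {h : Fin s₀ → ℝ} (hr0 : 0 < r) (hh : ∀ b, 0 < h b)
    (hkey : ∀ j, ∑ i ∈ Finset.Icc (-1 : ℤ) 1, ∑ k ∈ Finset.Icc (-1 : ℤ) 1, ∑ b,
      A i k j b * Real.exp ((i : ℝ) * θ₁ + (k : ℝ) * θ₂) * h b ≤ r * h j)
    (y : ℕ × ℕ × Fin s₀) :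
    ∑' z : ℕ × ℕ × Fin s₀, kerPlus A y z *
        ENNReal.ofReal (Real.exp (θ₁ * ((z.1 : ℤ) : ℝ) + θ₂ * ((z.2.1 : ℤ) : ℝ)) * h z.2.2) ≤
      ENNReal.ofReal r *
        ENNReal.ofReal (Real.exp (θ₁ * ((y.1 : ℤ) : ℝ) + θ₂ * ((y.2.1 : ℤ) : ℝ)) * h y.2.2) := by
  set W : ℤ × ℤ × Fin s₀ → ℝ≥0∞ :=
    fun z => ENNReal.ofReal (Real.exp (θ₁ * (z.1 : ℝ) + θ₂ * (z.2.1 : ℝ)) * h z.2.2) with hW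
  have h1 := kerPlus_tsum_le A hA y W
  refine le_trans h1 ?_
  have hterm : ∀ i ∈ Finset.Icc (-1 : ℤ) 1, ∀ k ∈ Finset.Icc (-1 : ℤ) 1, ∀ b : Fin s₀,
      ENNReal.ofReal (A i k y.2.2 b) * W ((y.1 : ℤ) + i, (y.2.1 : ℤ) + k, b) =
        ENNReal.ofReal (A i k y.2.2 b *
          (Real.exp (((y.1 : ℤ) : ℝ) * θ₁ + ((y.2.1 : ℤ) : ℝ) * θ₂) *
            (Real.exp ((i : ℝ) * θ₁ + (k : ℝ) * θ₂) * h b))) := by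
    intro i _ k _ b
    rw [hW, ← ENNReal.ofReal_mul (hA.nonneg _ _ _ _)]
    congr 1
    push_cast
    rw [show θ₁ * ((y.1 : ℝ) + (i : ℝ)) + θ₂ * ((y.2.1 : ℝ) + (k : ℝ)) =
      ((y.1 : ℝ) * θ₁ + (y.2.1 : ℝ) * θ₂) + ((i : ℝ) * θ₁ + (k : ℝ) * θ₂) from by ring,
      Real.exp_add]
    ring
  rw [Finset.sum_congr rfl fun i hi => Finset.sum_congr rfl fun k hk =>
    Finset.sum_congr rfl fun b _ => hterm i hi k hk b]
  have hsum : ∑ i ∈ Finset.Icc (-1 : ℤ) 1, ∑ k ∈ Finset.Icc (-1 : ℤ) 1, ∑ b,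
      ENNReal.ofReal (A i k y.2.2 b *
        (Real.exp (((y.1 : ℤ) : ℝ) * θ₁ + ((y.2.1 : ℤ) : ℝ) * θ₂) *
          (Real.exp ((i : ℝ) * θ₁ + (k : ℝ) * θ₂) * h b))) =
      ENNReal.ofReal (∑ i ∈ Finset.Icc (-1 : ℤ) 1, ∑ k ∈ Finset.Icc (-1 : ℤ) 1, ∑ b,
        A i k y.2.2 b *
          (Real.exp (((y.1 : ℤ) : ℝ) * θ₁ + ((y.2.1 : ℤ) : ℝ) * θ₂) *
            (Real.exp ((i : ℝ) * θ₁ + (k : ℝ) * θ₂) * h b))) := by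
    have hnn : ∀ (i k : ℤ) (b : Fin s₀), 0 ≤ A i k y.2.2 b *
        (Real.exp (((y.1 : ℤ) : ℝ) * θ₁ + ((y.2.1 : ℤ) : ℝ) * θ₂) *
          (Real.exp ((i : ℝ) * θ₁ + (k : ℝ) * θ₂) * h b)) :=
      fun i k b => mul_nonneg (hA.nonneg _ _ _ _)
        (mul_nonneg (Real.exp_nonneg _) (mul_nonneg (Real.exp_nonneg _) (hh b).le))
    rw [ENNReal.ofReal_sum_of_nonneg fun i _ => Finset.sum_nonneg fun k _ =>
      Finset.sum_nonneg fun b _ => hnn i k b]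
    refine Finset.sum_congr rfl fun i _ => ?_
    rw [ENNReal.ofReal_sum_of_nonneg fun k _ =>
      Finset.sum_nonneg fun b _ => hnn i k b]
    refine Finset.sum_congr rfl fun k _ => ?_
    rw [ENNReal.ofReal_sum_of_nonneg fun b _ => hnn i k b]
  rw [hsum]
  have hreal : ∑ i ∈ Finset.Icc (-1 : ℤ) 1, ∑ k ∈ Finset.Icc (-1 : ℤ) 1, ∑ b,
      A i k y.2.2 b *
        (Real.exp (((y.1 : ℤ) : ℝ) * θ₁ + ((y.2.1 : ℤ) : ℝ) * θ₂) *
          (Real.exp ((i : ℝ) * θ₁ + (k : ℝ) * θ₂) * h b)) ≤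
      r * (Real.exp (θ₁ * ((y.1 : ℤ) : ℝ) + θ₂ * ((y.2.1 : ℤ) : ℝ)) * h y.2.2) := by
    have factor : ∑ i ∈ Finset.Icc (-1 : ℤ) 1, ∑ k ∈ Finset.Icc (-1 : ℤ) 1, ∑ b,
        A i k y.2.2 b *
          (Real.exp (((y.1 : ℤ) : ℝ) * θ₁ + ((y.2.1 : ℤ) : ℝ) * θ₂) *
            (Real.exp ((i : ℝ) * θ₁ + (k : ℝ) * θ₂) * h b)) =
        Real.exp (((y.1 : ℤ) : ℝ) * θ₁ + ((y.2.1 : ℤ) : ℝ) * θ₂) *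
          ∑ i ∈ Finset.Icc (-1 : ℤ) 1, ∑ k ∈ Finset.Icc (-1 : ℤ) 1, ∑ b,
            A i k y.2.2 b * Real.exp ((i : ℝ) * θ₁ + (k : ℝ) * θ₂) * h b := by
      rw [Finset.mul_sum]
      refine Finset.sum_congr rfl fun i _ => ?_
      rw [Finset.mul_sum]
      refine Finset.sum_congr rfl fun k _ => ?_
      rw [Finset.mul_sum]
      exact Finset.sum_congr rfl fun b _ => by ring
    rw [factor]
    have := mul_le_mul_of_nonneg_left (hkey y.2.2)
      (Real.exp_nonneg (((y.1 : ℤ) : ℝ) * θ₁ + ((y.2.1 : ℤ) : ℝ) * θ₂))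
    refine le_trans this (le_of_eq ?_)
    ring_nf
  refine le_trans (ENNReal.ofReal_le_ofReal hreal) (le_of_eq ?_)
  rw [ENNReal.ofReal_mul hr0.le]

lemma kpow_weight_le (A : ℤ → ℤ → Matrix (Fin s₀) (Fin s₀) ℝ) (hA : IsMMRW A)
    {θ₁ θ₂ r : ℝ} {h : Fin s₀ → ℝ} (hr0 : 0 < r) (hh : ∀ b, 0 < h b)
    (hkey : ∀ j, ∑ i ∈ Finset.Icc (-1 : ℤ) 1, ∑ k ∈ Finset.Icc (-1 : ℤ) 1, ∑ b,
      A i k j b * Real.exp ((i : ℝ) * θ₁ + (k : ℝ) * θ₂) * h b ≤ r * h j) :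
    ∀ (n : ℕ) (y : ℕ × ℕ × Fin s₀),
      ∑' z : ℕ × ℕ × Fin s₀, kpow (kerPlus A) n y z *
          ENNReal.ofReal (Real.exp (θ₁ * ((z.1 : ℤ) : ℝ) + θ₂ * ((z.2.1 : ℤ) : ℝ)) * h z.2.2) ≤
        (ENNReal.ofReal r) ^ n *
          ENNReal.ofReal (Real.exp (θ₁ * ((y.1 : ℤ) : ℝ) + θ₂ * ((y.2.1 : ℤ) : ℝ)) * h y.2.2) := by
  set W : ℕ × ℕ × Fin s₀ → ℝ≥0∞ :=
    fun z => ENNReal.ofReal (Real.exp (θ₁ * ((z.1 : ℤ) : ℝ) + θ₂ * ((z.2.1 : ℤ) : ℝ)) * h z.2.2)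
    with hW
  intro n
  induction n with
  | zero =>
    intro y
    rw [tsum_eq_single y (by
      intro b hb
      show (if y = b then (1:ℝ≥0∞) else 0) * W b = 0
      rw [if_neg (Ne.symm hb), zero_mul])]
    show (if y = y then (1:ℝ≥0∞) else 0) * W y ≤ _
    rw [if_pos rfl, one_mul, pow_zero, one_mul]
  | succ n ih =>
    intro y
    have hexpand : ∀ z, kpow (kerPlus A) (n + 1) y z =
        ∑' w, kerPlus A y w * kpow (kerPlus A) n w z := fun z => rfl
    calc ∑' z, kpow (kerPlus A) (n + 1) y z * W z
        = ∑' z, ∑' w, kerPlus A y w * kpow (kerPlus A) n w z * W z := by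
          refine tsum_congr fun z => ?_
          rw [hexpand z, ← ENNReal.tsum_mul_right]
      _ = ∑' w, ∑' z, kerPlus A y w * kpow (kerPlus A) n w z * W z := ENNReal.tsum_comm
      _ = ∑' w, kerPlus A y w * ∑' z, kpow (kerPlus A) n w z * W z := by
          refine tsum_congr fun w => ?_
          rw [← ENNReal.tsum_mul_left]
          exact tsum_congr fun z => by rw [mul_assoc]
      _ ≤ ∑' w, kerPlus A y w * ((ENNReal.ofReal r) ^ n * W w) :=
          ENNReal.tsum_le_tsum fun w => mul_le_mul_right (ih w) _
      _ = (ENNReal.ofReal r) ^ n * ∑' w, kerPlus A y w * W w := by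
          rw [← ENNReal.tsum_mul_left]
          exact tsum_congr fun w => by ring
      _ ≤ (ENNReal.ofReal r) ^ n * (ENNReal.ofReal r * W y) :=
          mul_le_mul_right (weight_step A hA hr0 hh hkey y) _
      _ = (ENNReal.ofReal r) ^ (n + 1) * W y := by ring

lemma occ_weight_le (A : ℤ → ℤ → Matrix (Fin s₀) (Fin s₀) ℝ) (hA : IsMMRW A)
    {θ₁ θ₂ r : ℝ} {h : Fin s₀ → ℝ} (hr0 : 0 < r) (hh : ∀ b, 0 < h b)
    (hkey : ∀ j, ∑ i ∈ Finset.Icc (-1 : ℤ) 1, ∑ k ∈ Finset.Icc (-1 : ℤ) 1, ∑ b,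
      A i k j b * Real.exp ((i : ℝ) * θ₁ + (k : ℝ) * θ₂) * h b ≤ r * h j)
    (y : ℕ × ℕ × Fin s₀) :
    ∑' z : ℕ × ℕ × Fin s₀, occ A y z *
        ENNReal.ofReal (Real.exp (θ₁ * ((z.1 : ℤ) : ℝ) + θ₂ * ((z.2.1 : ℤ) : ℝ)) * h z.2.2) ≤
      (1 - ENNReal.ofReal r)⁻¹ *
        ENNReal.ofReal (Real.exp (θ₁ * ((y.1 : ℤ) : ℝ) + θ₂ * ((y.2.1 : ℤ) : ℝ)) * h y.2.2) := by
  set W : ℕ × ℕ × Fin s₀ → ℝ≥0∞ :=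
    fun z => ENNReal.ofReal (Real.exp (θ₁ * ((z.1 : ℤ) : ℝ) + θ₂ * ((z.2.1 : ℤ) : ℝ)) * h z.2.2)
    with hW
  calc ∑' z, occ A y z * W z
      = ∑' z, ∑' n : ℕ, kpow (kerPlus A) n y z * W z := by
        refine tsum_congr fun z => ?_
        rw [occ, ← ENNReal.tsum_mul_right]
    _ = ∑' n : ℕ, ∑' z, kpow (kerPlus A) n y z * W z := ENNReal.tsum_comm
    _ ≤ ∑' n : ℕ, (ENNReal.ofReal r) ^ n * W y :=
        ENNReal.tsum_le_tsum fun n => kpow_weight_le A hA hr0 hh hkey n y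
    _ = (∑' n : ℕ, (ENNReal.ofReal r) ^ n) * W y := ENNReal.tsum_mul_right
    _ = (1 - ENNReal.ofReal r)⁻¹ * W y := by rw [ENNReal.tsum_geometric]

lemma Phi_ne_top (hs : 0 < s₀) (A : ℤ → ℤ → Matrix (Fin s₀) (Fin s₀) ℝ)
    (hA : IsMMRW A) (h1 : Assumption1 A) (h2 : Assumption2 A) (x : ℕ × ℕ) :
    ∃ θstar : ℝ × ℝ, ∀ θ : ℝ × ℝ, θ.1 ≤ θstar.1 → θ.2 ≤ θstar.2 →
      ∀ j j', Phi A x θ j j' ≠ ⊤ := by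
  obtain ⟨θ₁, θ₂, r, h, hr0, hr1, hh, hkey⟩ := exists_lyapunov hs A hA h1 h2
  refine ⟨(θ₁, θ₂), ?_⟩
  rintro ⟨t₁, t₂⟩ ht₁ ht₂ j j'
  intro htop
  -- multiply `Phi` by `ofReal (h j')` and bound by the weighted occupation sum
  have hhj' : (0:ℝ) < h j' := hh j'
  set W : ℕ × ℕ × Fin s₀ → ℝ≥0∞ :=
    fun z => ENNReal.ofReal (Real.exp (θ₁ * ((z.1 : ℤ) : ℝ) + θ₂ * ((z.2.1 : ℤ) : ℝ)) * h z.2.2)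
    with hW
  have hbound : Phi A x (t₁, t₂) j j' * ENNReal.ofReal (h j') ≤
      (1 - ENNReal.ofReal r)⁻¹ *
        ENNReal.ofReal (Real.exp (θ₁ * ((x.1 : ℤ) : ℝ) + θ₂ * ((x.2 : ℤ) : ℝ)) * h j) := by
    calc Phi A x (t₁, t₂) j j' * ENNReal.ofReal (h j')
        = ∑' k : ℕ × ℕ, ENNReal.ofReal (Real.exp ((k.1 : ℝ) * t₁ + (k.2 : ℝ) * t₂)) *
            occ A (x.1, x.2, j) (k.1, k.2, j') * ENNReal.ofReal (h j') := by
          rw [Phi, ← ENNReal.tsum_mul_right]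
      _ ≤ ∑' k : ℕ × ℕ, occ A (x.1, x.2, j) (k.1, k.2, j') * W (k.1, k.2, j') := by
          refine ENNReal.tsum_le_tsum fun k => ?_
          rw [hW]
          have hexp : Real.exp ((k.1 : ℝ) * t₁ + (k.2 : ℝ) * t₂) * h j' ≤
              Real.exp (θ₁ * ((k.1 : ℤ) : ℝ) + θ₂ * ((k.2 : ℤ) : ℝ)) * h j' := by
            refine mul_le_mul_of_nonneg_right (Real.exp_le_exp.2 ?_) hhj'.le
            push_cast
            have b1 : (k.1 : ℝ) * t₁ ≤ (k.1 : ℝ) * θ₁ :=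
              mul_le_mul_of_nonneg_left ht₁ (Nat.cast_nonneg _)
            have b2 : (k.2 : ℝ) * t₂ ≤ (k.2 : ℝ) * θ₂ :=
              mul_le_mul_of_nonneg_left ht₂ (Nat.cast_nonneg _)
            nlinarith [b1, b2]
          calc ENNReal.ofReal (Real.exp ((k.1 : ℝ) * t₁ + (k.2 : ℝ) * t₂)) *
                occ A (x.1, x.2, j) (k.1, k.2, j') * ENNReal.ofReal (h j')
              = occ A (x.1, x.2, j) (k.1, k.2, j') *
                ENNReal.ofReal (Real.exp ((k.1 : ℝ) * t₁ + (k.2 : ℝ) * t₂) * h j') := by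
                rw [ENNReal.ofReal_mul (Real.exp_nonneg _)]
                ring
            _ ≤ occ A (x.1, x.2, j) (k.1, k.2, j') *
                ENNReal.ofReal (Real.exp (θ₁ * ((k.1 : ℤ) : ℝ) + θ₂ * ((k.2 : ℤ) : ℝ)) * h j') :=
                mul_le_mul_right (ENNReal.ofReal_le_ofReal hexp) _
      _ ≤ ∑' z : ℕ × ℕ × Fin s₀, occ A (x.1, x.2, j) z * W z := by
          have hinj : Function.Injective (fun k : ℕ × ℕ => (k.1, k.2, j')) := by
            rintro ⟨a, b⟩ ⟨c, d⟩ hk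
            simpa [Prod.ext_iff] using hk
          exact ENNReal.tsum_comp_le_tsum_of_injective hinj
            (fun z => occ A (x.1, x.2, j) z * W z)
      _ ≤ _ := occ_weight_le A hA hr0 hh hkey (x.1, x.2, j)
  rw [htop] at hbound
  have hne : ENNReal.ofReal (h j') ≠ 0 := by
    simp [ENNReal.ofReal_eq_zero, not_le, hhj']
  rw [ENNReal.top_mul hne] at hbound
  have hfin : (1 - ENNReal.ofReal r)⁻¹ *
      ENNReal.ofReal (Real.exp (θ₁ * ((x.1 : ℤ) : ℝ) + θ₂ * ((x.2 : ℤ) : ℝ)) * h j) ≠ ⊤ := by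
    refine ENNReal.mul_ne_top ?_ ENNReal.ofReal_ne_top
    have hrlt : ENNReal.ofReal r < 1 := ENNReal.ofReal_lt_one.2 hr1
    have hne0 : (1 : ℝ≥0∞) - ENNReal.ofReal r ≠ 0 := by
      rw [Ne, tsub_eq_zero_iff_le]
      exact not_le.2 hrlt
    exact ENNReal.inv_ne_top.2 hne0
  exact hfin (top_le_iff.1 hbound)

lemma domPhi_nonempty (hs : 0 < s₀) (A : ℤ → ℤ → Matrix (Fin s₀) (Fin s₀) ℝ)
    (hA : IsMMRW A) (h1 : Assumption1 A) (h2 : Assumption2 A) (x : ℕ × ℕ) :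
    (domPhi A x).Nonempty := by
  obtain ⟨θstar, hθ⟩ := Phi_ne_top hs A hA h1 h2 x
  have hopen : IsOpen {θ : ℝ × ℝ | θ.1 < θstar.1 ∧ θ.2 < θstar.2} :=
    IsOpen.inter (isOpen_lt continuous_fst continuous_const)
      (isOpen_lt continuous_snd continuous_const)
  have hsub : {θ : ℝ × ℝ | θ.1 < θstar.1 ∧ θ.2 < θstar.2} ⊆
      {θ : ℝ × ℝ | ∀ j j', Phi A x θ j j' ≠ ⊤} :=
    fun θ hθ' => hθ θ hθ'.1.le hθ'.2.le
  have hmem : (θstar.1 - 1, θstar.2 - 1) ∈ domPhi A x := by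
    rw [domPhi]
    refine interior_maximal hsub hopen ?_
    constructor <;> norm_num
  exact ⟨_, hmem⟩

/-- Proposition 2.4: under Assumptions 1, 2 and 3, for any
`c = (c₁,c₂) ∈ ℤ₊²` with `c ≠ 0`, every `(x,j) ∈ 𝕊₊`, `j' ∈ S₀` and `l₁,l₂ ∈ ℤ₊`,
`limsup_{k→∞} (1/k) log q̃_{(x,j),(kc₁+l₁,kc₂+l₂,j')} ≤ − sup_{θ∈𝒟_x} ⟨θ,c⟩`. -/
theorem occ_limsup_upper_bound {s₀ : ℕ} (hs : 0 < s₀)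
    (A : ℤ → ℤ → Matrix (Fin s₀) (Fin s₀) ℝ) (hA : IsMMRW A)
    (h1 : Assumption1 A) (h2 : Assumption2 A) (h3 : Assumption3 A)
    (c : ℕ × ℕ) (hc : c ≠ (0, 0)) (x : ℕ × ℕ) (j j' : Fin s₀) (l₁ l₂ : ℕ) :
    Filter.limsup (fun k : ℕ =>
        Real.log ((occ A (x.1, x.2, j) (k * c.1 + l₁, k * c.2 + l₂, j')).toReal) / (k : ℝ))
      Filter.atTop
    ≤ - sSup ((fun θ : ℝ × ℝ => θ.1 * (c.1 : ℝ) + θ.2 * (c.2 : ℝ)) '' domPhi A x) := by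
  classical
  obtain ⟨δ₁, δ, hδ₁0, hδ₁1, hδ0, hδ1, hlow⟩ :=
    exists_occ_lower A hA h3 x.1 x.2 l₁ l₂ c.1 c.2 j j'
  have hδ₁top : δ₁ ≠ ⊤ := ne_top_of_le_ne_top ENNReal.one_ne_top hδ₁1
  have hδtop : δ ≠ ⊤ := ne_top_of_le_ne_top ENNReal.one_ne_top hδ1
  set u : ℕ → ℝ := fun k : ℕ =>
    Real.log ((occ A (x.1, x.2, j) (k * c.1 + l₁, k * c.2 + l₂, j')).toReal) / (k : ℝ)
    with hu_def
  have hδ₁pos : 0 < δ₁.toReal := ENNReal.toReal_pos hδ₁0.ne' hδ₁top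
  have hδpos : 0 < δ.toReal := ENNReal.toReal_pos hδ0.ne' hδtop
  have hδ₁le1 : δ₁.toReal ≤ 1 := by
    simpa using ENNReal.toReal_mono ENNReal.one_ne_top hδ₁1
  have hlogδ₁ : Real.log δ₁.toReal ≤ 0 := Real.log_nonpos hδ₁pos.le hδ₁le1
  set bb : ℝ := min 0 (Real.log δ₁.toReal + Real.log δ.toReal) with hbb
  have hlb : ∀ k : ℕ, 1 ≤ k → bb ≤ u k := by
    intro k hk
    have hkR : (1 : ℝ) ≤ (k : ℝ) := by exact_mod_cast hk
    have hkpos : (0 : ℝ) < (k : ℝ) := by linarith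
    by_cases htop : occ A (x.1, x.2, j) (k * c.1 + l₁, k * c.2 + l₂, j') = ⊤
    · have hz : u k = 0 := by
        rw [hu_def]
        simp [htop]
      rw [hz]
      exact min_le_left _ _
    · have hle := hlow k
      have hprod_pos : 0 < δ₁.toReal * δ.toReal ^ k := by positivity
      have htr : δ₁.toReal * δ.toReal ^ k ≤
          (occ A (x.1, x.2, j) (k * c.1 + l₁, k * c.2 + l₂, j')).toReal := by
        have h7 := ENNReal.toReal_mono htop hle
        rwa [ENNReal.toReal_mul, ENNReal.toReal_pow] at h7
      have hopos : 0 <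
          (occ A (x.1, x.2, j) (k * c.1 + l₁, k * c.2 + l₂, j')).toReal :=
        lt_of_lt_of_le hprod_pos htr
      have hlog : Real.log δ₁.toReal + (k : ℝ) * Real.log δ.toReal ≤
          Real.log ((occ A (x.1, x.2, j) (k * c.1 + l₁, k * c.2 + l₂, j')).toReal) := by
        have h8 := Real.log_le_log hprod_pos htr
        rwa [Real.log_mul hδ₁pos.ne' (by positivity), Real.log_pow] at h8
      have hmain : bb ≤
          Real.log ((occ A (x.1, x.2, j) (k * c.1 + l₁, k * c.2 + l₂, j')).toReal) / (k : ℝ) := by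
        rw [le_div_iff₀ hkpos]
        have hb1 : bb ≤ Real.log δ₁.toReal + Real.log δ.toReal := min_le_right _ _
        have hb0 : bb ≤ 0 := min_le_left _ _
        have e1 : Real.log δ₁.toReal * (k : ℝ) ≤ Real.log δ₁.toReal * 1 :=
          mul_le_mul_of_nonpos_left hkR hlogδ₁
        rcases le_or_gt (Real.log δ.toReal) 0 with hld | hld
        · have e2 : bb * (k : ℝ) ≤ (Real.log δ₁.toReal + Real.log δ.toReal) * (k : ℝ) :=
            mul_le_mul_of_nonneg_right hb1 (by linarith)
          nlinarith
        · have e3 : bb * (k : ℝ) ≤ bb * 1 := mul_le_mul_of_nonpos_left hkR hb0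
          have e4 : Real.log δ.toReal * 1 ≤ Real.log δ.toReal * (k : ℝ) :=
            mul_le_mul_of_nonneg_left hkR hld.le
          nlinarith
      exact hmain
  have hbdd_below : Filter.IsBoundedUnder (· ≥ ·) Filter.atTop u :=
    ⟨bb, by simpa using Filter.eventually_atTop.2 ⟨1, fun k hk => hlb k hk⟩⟩
  have hcob : Filter.IsCoboundedUnder (· ≤ ·) Filter.atTop u :=
    hbdd_below.isCoboundedUnder_le
  -- the bound for a fixed `θ` in the domain
  have hper : ∀ θ : ℝ × ℝ, θ ∈ domPhi A x →
      Filter.limsup u Filter.atTop ≤ -(θ.1 * (c.1 : ℝ) + θ.2 * (c.2 : ℝ)) := by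
    intro θ hθ
    have hfin : Phi A x θ j j' ≠ ⊤ := (interior_subset hθ) j j'
    set M : ℝ := (Phi A x θ j j').toReal with hM
    set ρ : ℝ := θ.1 * (c.1 : ℝ) + θ.2 * (c.2 : ℝ) with hρ
    set C : ℝ := Real.log M - ((l₁ : ℝ) * θ.1 + (l₂ : ℝ) * θ.2) with hC
    have hbound : ∀ k : ℕ, 1 ≤ k → u k ≤ C / (k : ℝ) - ρ := by
      intro k hk
      have hkR : (1 : ℝ) ≤ (k : ℝ) := by exact_mod_cast hk
      have hkpos : (0 : ℝ) < (k : ℝ) := by linarith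
      set o : ℝ≥0∞ := occ A (x.1, x.2, j) (k * c.1 + l₁, k * c.2 + l₂, j') with ho
      set w : ℝ := ((k * c.1 + l₁ : ℕ) : ℝ) * θ.1 + ((k * c.2 + l₂ : ℕ) : ℝ) * θ.2 with hw
      have hterm : ENNReal.ofReal (Real.exp w) * o ≤ Phi A x θ j j' := by
        have h9 := ENNReal.le_tsum
          (f := fun kk : ℕ × ℕ => ENNReal.ofReal
            (Real.exp ((kk.1 : ℝ) * θ.1 + (kk.2 : ℝ) * θ.2)) *
            occ A (x.1, x.2, j) (kk.1, kk.2, j'))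
          ((k * c.1 + l₁, k * c.2 + l₂))
        exact h9
      have hexp_ne : ENNReal.ofReal (Real.exp w) ≠ 0 := by
        simp [ENNReal.ofReal_eq_zero, not_le, Real.exp_pos]
      have hotop : o ≠ ⊤ := by
        intro hcon
        rw [hcon, ENNReal.mul_top hexp_ne] at hterm
        exact hfin (top_le_iff.1 hterm)
      have htr : Real.exp w * o.toReal ≤ M := by
        have h10 := ENNReal.toReal_mono hfin hterm
        rwa [ENNReal.toReal_mul, ENNReal.toReal_ofReal (Real.exp_nonneg _)] at h10
      have hopos : 0 < o.toReal := by
        refine ENNReal.toReal_pos ?_ hotop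
        have hp : 0 < δ₁ * δ ^ k :=
          ENNReal.mul_pos hδ₁0.ne' (ENNReal.pow_ne_zero hδ0.ne' k)
        exact (lt_of_lt_of_le hp (hlow k)).ne'
      have hlog : Real.log o.toReal ≤ Real.log M - w := by
        have h11 := Real.log_le_log (by positivity) htr
        rw [Real.log_mul (Real.exp_ne_zero _) hopos.ne', Real.log_exp] at h11
        linarith
      have hwk : w = (k : ℝ) * ρ + ((l₁ : ℝ) * θ.1 + (l₂ : ℝ) * θ.2) := by
        rw [hw, hρ]
        push_cast
        ring
      have hstep : Real.log o.toReal / (k : ℝ) ≤ (Real.log M - w) / (k : ℝ) := by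
        gcongr
      have heq : (Real.log M - w) / (k : ℝ) = C / (k : ℝ) - ρ := by
        rw [hwk, hC]
        field_simp
        ring
      calc u k = Real.log o.toReal / (k : ℝ) := rfl
        _ ≤ (Real.log M - w) / (k : ℝ) := hstep
        _ = C / (k : ℝ) - ρ := heq
    have htend : Filter.Tendsto (fun k : ℕ => C / (k : ℝ) - ρ) Filter.atTop (nhds (0 - ρ)) :=
      (tendsto_const_div_atTop_nhds_zero_nat C).sub_const ρ
    have hev : u ≤ᶠ[Filter.atTop] fun k : ℕ => C / (k : ℝ) - ρ :=
      Filter.eventually_atTop.2 ⟨1, hbound⟩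
    have hfinal := Filter.limsup_le_limsup hev hcob htend.isBoundedUnder_le
    rw [htend.limsup_eq] at hfinal
    simpa using hfinal
  -- conclusion
  obtain ⟨θ₀, hθ₀⟩ := domPhi_nonempty hs A hA h1 h2 x
  by_cases hbdd : BddAbove ((fun θ : ℝ × ℝ => θ.1 * (c.1 : ℝ) + θ.2 * (c.2 : ℝ)) '' domPhi A x)
  · have h6 : sSup ((fun θ : ℝ × ℝ => θ.1 * (c.1 : ℝ) + θ.2 * (c.2 : ℝ)) '' domPhi A x) ≤
        -Filter.limsup u Filter.atTop := by
      refine csSup_le ⟨_, Set.mem_image_of_mem _ hθ₀⟩ ?_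
      rintro bbb ⟨θ, hθ, rfl⟩
      have := hper θ hθ
      show θ.1 * (c.1 : ℝ) + θ.2 * (c.2 : ℝ) ≤ -Filter.limsup u Filter.atTop
      linarith
    linarith
  · rw [Real.sSup_of_not_bddAbove hbdd, neg_zero]
    obtain ⟨yv, ⟨θ, hθ, rfl⟩, hy⟩ := not_bddAbove_iff.1 hbdd 0
    have := hper θ hθ
    have hy' : (0 : ℝ) < θ.1 * (c.1 : ℝ) + θ.2 * (c.2 : ℝ) := hy
    linarith
end MMRW2d
end
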